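/- Let L be a natural number, m ≥ 1, and q₁, …, q_m ∈ [L]³. Let C₂, C₁, C₀ be the 𝔽₂-vector spaces freely spanned by the squares, the edges, and the points of the grid [L]³, with boundary maps ∂₂ : C₂ → C₁ sending each square to the sum of its four boundary edges, and ∂₁ : C₁ → C₀ sending each edge to the sum of its two endpoints. If x ∈ C₁ is supported on the union over i = 1, …, m of the edges of Λ(q_i), and ∂₁ x = 0, then there exists y ∈ C₂ supported on the union over i = 1, …, m of the squares of Λ(q_i) such that ∂₂ y = x. -/

import Mathlib

open scoped Classical

/-- `stepAt i u v` means `v = u + e_i`: the points `u` and `v` agree at every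
coordinate other than `i`, and the `i`-th coordinate of `v` is that of `u` plus 1. -/
def stepAt {L D : ℕ} (i : Fin D) (u v : Fin D → Fin L) : Prop :=
  (∀ j : Fin D, j ≠ i → v j = u j) ∧ (v i : ℕ) = (u i : ℕ) + 1

/-- The star plane `Λ(q)`: points of the grid agreeing with `q` in all but at
most two coordinates. -/
def starPlane {L D : ℕ} (q : Fin D → Fin L) : Set (Fin D → Fin L) :=
  { p | Set.ncard { k : Fin D | p k ≠ q k } ≤ 2 }

/-- An edge of the grid `[L]³`, encoded by its lower endpoint and its direction
(the upper endpoint `pt + e_dir` must still lie in the grid). -/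
abbrev GridEdge (L : ℕ) :=
  { e : (Fin 3 → Fin L) × Fin 3 // (e.1 e.2 : ℕ) + 1 < L }

/-- A square of the grid `[L]³`, encoded by its lower corner and the two
directions `i < j` (the corners `pt + e_i`, `pt + e_j`, `pt + e_i + e_j` must
still lie in the grid). -/
abbrev GridSquare (L : ℕ) :=
  { s : (Fin 3 → Fin L) × Fin 3 × Fin 3 //
      s.2.1 < s.2.2 ∧ (s.1 s.2.1 : ℕ) + 1 < L ∧ (s.1 s.2.2 : ℕ) + 1 < L }

/-- The upper endpoint of a grid edge: `pt + e_dir`. -/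
def GridEdge.upper {L : ℕ} (e : GridEdge L) : Fin 3 → Fin L :=
  Function.update e.1.1 e.1.2 ⟨(e.1.1 e.1.2 : ℕ) + 1, e.2⟩

/-- `v` is an endpoint of the grid edge `e`. -/
def GridEdge.endpoint {L : ℕ} (e : GridEdge L) (v : Fin 3 → Fin L) : Prop :=
  v = e.1.1 ∨ v = e.upper

/-- The grid edge `e` is one of the four boundary edges of the grid square `s`. -/
def GridSquare.bdryEdge {L : ℕ} (s : GridSquare L) (e : GridEdge L) : Prop :=
  (e.1.1 = s.1.1 ∧ (e.1.2 = s.1.2.1 ∨ e.1.2 = s.1.2.2)) ∨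
  (e.1.2 = s.1.2.1 ∧ stepAt s.1.2.2 s.1.1 e.1.1) ∨
  (e.1.2 = s.1.2.2 ∧ stepAt s.1.2.1 s.1.1 e.1.1)

/-- `v` is one of the four corners of the grid square `s`. -/
def GridSquare.corner {L : ℕ} (s : GridSquare L) (v : Fin 3 → Fin L) : Prop :=
  v = s.1.1 ∨ stepAt s.1.2.1 s.1.1 v ∨ stepAt s.1.2.2 s.1.1 v ∨
    ∃ w : Fin 3 → Fin L, stepAt s.1.2.1 s.1.1 w ∧ stepAt s.1.2.2 w v

/-- The boundary map `∂₁ : C₁ → C₀` of the cubical chain complex of the grid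
`[L]³` over `𝔽₂`, sending each edge to the sum of its two endpoints. -/
noncomputable def d1 (L : ℕ) (x : GridEdge L → ZMod 2) :
    (Fin 3 → Fin L) → ZMod 2 :=
  fun v => ∑ e : GridEdge L, if e.endpoint v then x e else 0

/-- The boundary map `∂₂ : C₂ → C₁` of the cubical chain complex of the grid
`[L]³` over `𝔽₂`, sending each square to the sum of its four boundary edges. -/
noncomputable def d2 (L : ℕ) (y : GridSquare L → ZMod 2) :
    GridEdge L → ZMod 2 :=
  fun e => ∑ s : GridSquare L, if s.bdryEdge e then y s else 0

namespace Stmt13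

variable {L : ℕ}

lemma z2_cases (a : ZMod 2) : a = 0 ∨ a = 1 := by revert a; decide
lemma z2_ne (a : ZMod 2) (h : a ≠ 0) : a = 1 := by
  rcases z2_cases a with h' | h' <;> simp_all
lemma z2_addself (a : ZMod 2) : a + a = 0 := by
  rcases z2_cases a with h | h <;> simp [h]; decide

/-- Dirac delta vertex chain. -/
noncomputable def dl (u : Fin 3 → Fin L) : (Fin 3 → Fin L) → ZMod 2 :=
  fun w => if w = u then 1 else 0

lemma upper_apply_ne {e : GridEdge L} {j : Fin 3} (h : j ≠ e.1.2) :
    e.upper j = e.1.1 j := by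
  simp [GridEdge.upper, Function.update_of_ne h]

lemma upper_apply_self (e : GridEdge L) :
    (e.upper e.1.2 : ℕ) = (e.1.1 e.1.2 : ℕ) + 1 := by
  simp [GridEdge.upper]

lemma lower_ne_upper (e : GridEdge L) : e.1.1 ≠ e.upper := by
  intro h
  have := congrArg (fun f => (f e.1.2 : ℕ)) h
  rw [upper_apply_self] at this
  omega

lemma d1_add (x x' : GridEdge L → ZMod 2) :
    d1 L (x + x') = d1 L x + d1 L x' := by
  funext v
  simp only [d1, Pi.add_apply]
  rw [← Finset.sum_add_distrib]
  refine Finset.sum_congr rfl fun e _ => ?_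
  by_cases h : e.endpoint v <;> simp [h]

lemma d2_add (y y' : GridSquare L → ZMod 2) :
    d2 L (y + y') = d2 L y + d2 L y' := by
  funext e
  simp only [d2, Pi.add_apply]
  rw [← Finset.sum_add_distrib]
  refine Finset.sum_congr rfl fun s _ => ?_
  by_cases h : s.bdryEdge e <;> simp [h]

lemma d1_zero : d1 L 0 = 0 := by
  funext v; simp [d1]

lemma d2_zero : d2 L 0 = 0 := by
  funext e; simp [d2]

lemma d1_single (e : GridEdge L) :
    d1 L (fun e' => if e' = e then 1 else 0) = dl e.1.1 + dl e.upper := by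
  funext v
  simp only [d1, Pi.add_apply, dl]
  rw [Finset.sum_congr rfl (fun e' _ => show (if GridEdge.endpoint e' v then (if e' = e then (1:ZMod 2) else 0) else 0) = (if e' = e then (if e.endpoint v then 1 else 0) else 0) by
    by_cases h : e' = e <;> simp [h])]
  rw [Finset.sum_ite_eq' Finset.univ e]
  simp only [Finset.mem_univ, if_true]
  by_cases h1 : v = e.1.1
  · subst h1
    simp [GridEdge.endpoint, lower_ne_upper e]
  · by_cases h2 : v = e.upper
    · subst h2
      simp [GridEdge.endpoint, h1]
    · simp [GridEdge.endpoint, h1, h2]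

lemma d1_support {z : GridEdge L → ZMod 2} {v : Fin 3 → Fin L} (h : d1 L z v ≠ 0) :
    ∃ e : GridEdge L, z e ≠ 0 ∧ e.endpoint v := by
  by_contra hc
  push_neg at hc
  apply h
  simp only [d1]
  refine Finset.sum_eq_zero fun e _ => ?_
  by_cases he : e.endpoint v
  · simp only [he, if_true]
    by_contra hz
    exact (hc e hz he).elim
  · simp [he]

/-! ### Section B: line chains -/

lemma update_eq_iff' {u v : Fin 3 → Fin L} {d : Fin 3} {t : Fin L} :
    v = Function.update u d t ↔ (v d = t ∧ ∀ j ≠ d, v j = u j) := by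
  constructor
  · rintro rfl
    exact ⟨Function.update_self _ _ _, fun j hj => Function.update_of_ne hj _ _⟩
  · rintro ⟨h1, h2⟩
    funext j
    by_cases hj : j = d
    · subst hj; simpa using h1
    · rw [Function.update_of_ne hj]; exact h2 j hj

/-- A chain along the `d`-line from `u` to `update u d t`, supported on edges of
that line. -/
lemma lineChain (u : Fin 3 → Fin L) (d : Fin 3) (t : Fin L) :
    ∃ z : GridEdge L → ZMod 2,
      d1 L z = dl u + dl (Function.update u d t) ∧
      ∀ e, z e ≠ 0 → e.1.2 = d ∧ ∀ j ≠ d, e.1.1 j = u j := by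
  have cancel : ∀ p q r : ZMod 2, (p + q) + (q + r) = p + r := by decide
  have key : ∀ n : ℕ, ∀ u : Fin 3 → Fin L,
      ((t : ℕ) - (u d : ℕ)) + ((u d : ℕ) - (t : ℕ)) = n →
      ∃ z : GridEdge L → ZMod 2,
        d1 L z = dl u + dl (Function.update u d t) ∧
        ∀ e, z e ≠ 0 → e.1.2 = d ∧ ∀ j ≠ d, e.1.1 j = u j := by
    intro n
    induction n using Nat.strong_induction_on with
    | _ n ih =>
      intro u hn
      rcases Nat.lt_trichotomy (u d : ℕ) (t : ℕ) with h | h | h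
      · -- upward step
        have hlt : (u d : ℕ) + 1 < L := lt_of_le_of_lt h t.isLt
        set u' : Fin 3 → Fin L := Function.update u d ⟨(u d : ℕ) + 1, hlt⟩ with hu'
        have hu'd : (u' d : ℕ) = (u d : ℕ) + 1 := by simp [hu']
        obtain ⟨z, hz, hzs⟩ := ih (((t:ℕ) - (u' d:ℕ)) + ((u' d:ℕ) - (t:ℕ)))
          (by omega) u' rfl
        set e0 : GridEdge L := ⟨(u, d), hlt⟩ with he0
        have hupper : e0.upper = u' := rfl
        refine ⟨(fun e' => if e' = e0 then 1 else 0) + z, ?_, ?_⟩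
        · rw [d1_add, d1_single, hupper, hz]
          have : Function.update u' d t = Function.update u d t :=
            Function.update_idem ..
          rw [this]
          funext w
          exact cancel _ _ _
        · intro e he
          have : (if e = e0 then (1:ZMod 2) else 0) ≠ 0 ∨ z e ≠ 0 := by
            by_contra hc
            push_neg at hc
            exact he (by simp [Pi.add_apply, hc.1, hc.2])
          rcases this with h1 | h1
          · have : e = e0 := by by_contra hne; simp [hne] at h1
            subst this
            exact ⟨rfl, fun j hj => rfl⟩
          · obtain ⟨hd, hcoord⟩ := hzs e h1
            refine ⟨hd, fun j hj => ?_⟩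
            rw [hcoord j hj, hu', Function.update_of_ne hj]
      · -- already there
        refine ⟨0, ?_, by simp⟩
        have : Function.update u d t = u := by
          have : t = u d := Fin.ext h.symm
          subst this; exact Function.update_eq_self _ _
        rw [this, d1_zero]
        funext w; simp [dl, z2_addself]
      · -- downward step
        have h1le : 1 ≤ (u d : ℕ) := by omega
        have hltL : (u d : ℕ) - 1 < L := by have := (u d).isLt; omega
        set u' : Fin 3 → Fin L := Function.update u d ⟨(u d : ℕ) - 1, hltL⟩ with hu'
        have hu'd : (u' d : ℕ) = (u d : ℕ) - 1 := by simp [hu']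
        have hpf : (u' d : ℕ) + 1 < L := by have := (u d).isLt; omega
        obtain ⟨z, hz, hzs⟩ := ih (((t:ℕ) - (u' d:ℕ)) + ((u' d:ℕ) - (t:ℕ)))
          (by omega) u' rfl
        set e0 : GridEdge L := ⟨(u', d), hpf⟩ with he0
        have hupper : e0.upper = u := by
          funext j
          by_cases hj : j = d
          · subst hj
            have : (e0.upper j : ℕ) = (u' j : ℕ) + 1 := upper_apply_self e0
            apply Fin.ext
            rw [this, hu'd]
            omega
          · rw [upper_apply_ne (show j ≠ e0.1.2 from hj)]
            show u' j = u j
            simp [hu', Function.update_of_ne hj]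
        refine ⟨(fun e' => if e' = e0 then 1 else 0) + z, ?_, ?_⟩
        · rw [d1_add, d1_single, hupper, hz]
          have : Function.update u' d t = Function.update u d t :=
            Function.update_idem ..
          rw [this]
          funext w
          have : ∀ p q r : ZMod 2, (q + p) + (q + r) = p + r := by decide
          exact this _ _ _
        · intro e he
          have : (if e = e0 then (1:ZMod 2) else 0) ≠ 0 ∨ z e ≠ 0 := by
            by_contra hc
            push_neg at hc
            exact he (by simp [Pi.add_apply, hc.1, hc.2])
          rcases this with h1 | h1
          · have : e = e0 := by by_contra hne; simp [hne] at h1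
            subst this
            refine ⟨rfl, fun j hj => ?_⟩
            show u' j = u j
            simp [hu', Function.update_of_ne hj]
          · obtain ⟨hd, hcoord⟩ := hzs e h1
            refine ⟨hd, fun j hj => ?_⟩
            rw [hcoord j hj, hu', Function.update_of_ne hj]
  exact key _ u rfl

/-! ### Section C: even vertex chains are boundaries -/

lemma dl_sum (u : Fin 3 → Fin L) : (∑ v, dl u v) = 1 := by
  simp [dl, Finset.sum_ite_eq' Finset.univ u]

lemma evenFill (Good : GridEdge L → Prop) (b : (Fin 3 → Fin L) → ZMod 2)
    (hsum : (∑ v, b v) = 0)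
    (hreach : ∀ u v, b u ≠ 0 → b v ≠ 0 → u ≠ v →
      ∃ z, d1 L z = dl u + dl v ∧ ∀ e, z e ≠ 0 → Good e) :
    ∃ z, d1 L z = b ∧ ∀ e, z e ≠ 0 → Good e := by
  have key : ∀ n : ℕ, ∀ b : (Fin 3 → Fin L) → ZMod 2,
      (Finset.univ.filter (fun v => b v ≠ 0)).card = n →
      (∑ v, b v) = 0 →
      (∀ u v, b u ≠ 0 → b v ≠ 0 → u ≠ v →
        ∃ z, d1 L z = dl u + dl v ∧ ∀ e, z e ≠ 0 → Good e) →
      ∃ z, d1 L z = b ∧ ∀ e, z e ≠ 0 → Good e := by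
    intro n
    induction n using Nat.strong_induction_on with
    | _ n ih =>
      intro b hcard hsum hreach
      rcases Finset.eq_empty_or_nonempty (Finset.univ.filter (fun v => b v ≠ 0)) with hemp | ⟨u, hu⟩
      · refine ⟨0, ?_, by simp⟩
        rw [d1_zero]
        funext v
        by_contra hv
        have hbv : b v ≠ 0 := fun h => hv (by simp [h])
        have : v ∈ Finset.univ.filter (fun v => b v ≠ 0) :=
          Finset.mem_filter.mpr ⟨Finset.mem_univ v, hbv⟩
        rw [hemp] at this
        exact absurd this (Finset.notMem_empty v)
      · have hbu : b u ≠ 0 := (Finset.mem_filter.mp hu).2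
        have hsf : (∑ v ∈ Finset.univ.filter (fun v => b v ≠ 0), b v) = 0 := by
          rw [Finset.sum_filter_of_ne (fun x _ h => h)]
          exact hsum
        have : ∃ v ∈ Finset.univ.filter (fun v => b v ≠ 0), v ≠ u := by
          by_contra hc
          push_neg at hc
          have : Finset.univ.filter (fun v => b v ≠ 0) = {u} := by
            apply Finset.eq_singleton_iff_unique_mem.mpr
            exact ⟨hu, hc⟩
          rw [this, Finset.sum_singleton] at hsf
          exact hbu hsf
        obtain ⟨v, hv, hvu⟩ := this
        have hbv : b v ≠ 0 := (Finset.mem_filter.mp hv).2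
        obtain ⟨z0, hz0, hz0s⟩ := hreach u v hbu hbv (fun h => hvu (h.symm))
        set b' : (Fin 3 → Fin L) → ZMod 2 := fun w => b w + (dl u w + dl v w) with hb'
        have hb'u : b' u = 0 := by
          simp only [hb', dl, if_pos rfl, if_neg (fun h : u = v => hvu h.symm)]
          rw [z2_ne (b u) hbu]; decide
        have hb'v : b' v = 0 := by
          simp only [hb', dl, if_pos rfl, if_neg hvu]
          rw [z2_ne (b v) hbv]; decide
        have hb'w : ∀ w, w ≠ u → w ≠ v → b' w = b w := by
          intro w h1 h2
          simp [hb', dl, h1, h2]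
        have hfilt : Finset.univ.filter (fun w => b' w ≠ 0) =
            ((Finset.univ.filter (fun w => b w ≠ 0)).erase u).erase v := by
          ext w
          simp only [Finset.mem_filter, Finset.mem_erase, Finset.mem_univ, true_and]
          constructor
          · intro hw
            have h1 : w ≠ u := by rintro rfl; exact hw hb'u
            have h2 : w ≠ v := by rintro rfl; exact hw hb'v
            exact ⟨h2, h1, by rwa [hb'w w h1 h2] at hw⟩
          · rintro ⟨h2, h1, hw⟩
            rwa [hb'w w h1 h2]
        have hcard' : (Finset.univ.filter (fun w => b' w ≠ 0)).card = n - 2 := by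
          rw [hfilt, Finset.card_erase_of_mem (Finset.mem_erase.mpr ⟨hvu, hv⟩),
            Finset.card_erase_of_mem hu, hcard]
          omega
        have hn2 : n - 2 < n := by
          have : 0 < n := by
            rw [← hcard]
            exact Finset.card_pos.mpr ⟨u, hu⟩
          omega
        have hsum' : (∑ w, b' w) = 0 := by
          simp only [hb']
          rw [Finset.sum_add_distrib, Finset.sum_add_distrib, hsum, dl_sum, dl_sum]
          decide
        obtain ⟨z', hz', hz's⟩ := ih (n - 2) hn2 b' hcard' hsum'
          (by
            intro a c ha hc hac
            have ha' : b a ≠ 0 := by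
              by_cases h1 : a = u
              · subst h1; exact absurd hb'u ha
              · by_cases h2 : a = v
                · subst h2; exact absurd hb'v ha
                · rwa [hb'w a h1 h2] at ha
            have hc' : b c ≠ 0 := by
              by_cases h1 : c = u
              · subst h1; exact absurd hb'u hc
              · by_cases h2 : c = v
                · subst h2; exact absurd hb'v hc
                · rwa [hb'w c h1 h2] at hc
            exact hreach a c ha' hc' hac)
        refine ⟨z0 + z', ?_, ?_⟩
        · rw [d1_add, hz0, hz']
          funext w
          simp only [Pi.add_apply, hb']
          have : ∀ p q : ZMod 2, q + (p + q) = p := by decide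
          exact this _ _
        · intro e he
          have : z0 e ≠ 0 ∨ z' e ≠ 0 := by
            by_contra hcc
            push_neg at hcc
            exact he (by simp [Pi.add_apply, hcc.1, hcc.2])
          rcases this with h1 | h1
          · exact hz0s e h1
          · exact hz's e h1
  exact key _ b rfl hsum hreach

/-! ### Section D: half-space sums and plane identities -/

lemma ite_or_split {c : ZMod 2} {P Q : Prop} {iP : Decidable P} {iQ : Decidable Q}
    {iPQ : Decidable (P ∨ Q)} (h : ¬ (P ∧ Q)) :
    (if P ∨ Q then c else 0) = (if P then c else 0) + (if Q then c else 0) := by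
  by_cases hP : P <;> by_cases hQ : Q <;> simp_all

lemma halfSum (x : GridEdge L → ZMod 2) (hx : d1 L x = 0)
    (V : Finset (Fin 3 → Fin L)) :
    (∑ e : GridEdge L,
      ((if e.1.1 ∈ V then x e else 0) + (if e.upper ∈ V then x e else 0))) = 0 := by
  have h0 : (∑ v ∈ V, d1 L x v) = 0 := by
    rw [Finset.sum_congr rfl (fun v _ => congrFun hx v)]
    simp
  refine Eq.trans ?_ h0
  simp only [d1]
  rw [Finset.sum_comm]
  refine Finset.sum_congr rfl fun e _ => ?_
  have hsplit : ∀ v : Fin 3 → Fin L, (if e.endpoint v then x e else 0) =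
      (if v = e.1.1 then x e else 0) + (if v = e.upper then x e else 0) := by
    intro v
    unfold GridEdge.endpoint
    refine ite_or_split (P := v = e.1.1) (Q := v = e.upper) ?_
    rintro ⟨rfl, h2⟩
    exact lower_ne_upper e h2
  rw [Finset.sum_congr rfl (fun v _ => hsplit v), Finset.sum_add_distrib,
    Finset.sum_ite_eq' V e.1.1, Finset.sum_ite_eq' V e.upper]

section Plane

variable (a b k : Fin 3) (x : GridEdge L → ZMod 2)

/-- Sum of `x` over direction-`b` edges on the `a`-line through `p`, strictly
beyond `p` in coordinate `a`. -/
noncomputable def F (p : Fin 3 → Fin L) : ZMod 2 :=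
  ∑ e : GridEdge L, if (e.1.2 = b ∧ (e.1.1 b : ℕ) = (p b : ℕ) ∧
      (e.1.1 k : ℕ) = (p k : ℕ) ∧ (p a : ℕ) < (e.1.1 a : ℕ)) then x e else 0

/-- Like `F` but one row lower in coordinate `b`. -/
noncomputable def Fm (p : Fin 3 → Fin L) : ZMod 2 :=
  ∑ e : GridEdge L, if (e.1.2 = b ∧ (e.1.1 b : ℕ) + 1 = (p b : ℕ) ∧
      (e.1.1 k : ℕ) = (p k : ℕ) ∧ (p a : ℕ) < (e.1.1 a : ℕ)) then x e else 0

variable {a b k x}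
variable (hab : a ≠ b) (hak : a ≠ k) (hbk : b ≠ k)
variable (htot : ∀ j : Fin 3, j = a ∨ j = b ∨ j = k)
variable (hx : ∀ e : GridEdge L, x e ≠ 0 → e.1.2 ≠ k)
variable (hcyc : d1 L x = 0)

include hab hak hbk htot hx hcyc in
lemma rowId (p : Fin 3 → Fin L) :
    (∑ e : GridEdge L, if (e.1.2 = b ∧ (e.1.1 b : ℕ) = (p b : ℕ) ∧
      (e.1.1 k : ℕ) = (p k : ℕ)) then x e else 0) = 0 := by
  have h := halfSum x hcyc (Finset.univ.filter
    (fun v => (v k : ℕ) = (p k : ℕ) ∧ (v b : ℕ) ≤ (p b : ℕ)))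
  refine Eq.trans (Finset.sum_congr rfl fun e _ => ?_) h
  simp only [Finset.mem_filter, Finset.mem_univ, true_and]
  by_cases hxe : x e = 0
  · simp [hxe]
  rcases htot e.1.2 with hd | hd | hd
  · -- direction a: both endpoints agree in coords b, k
    have h1 : (e.upper b : ℕ) = (e.1.1 b : ℕ) :=
      congrArg Fin.val (upper_apply_ne (by rw [hd]; exact (Ne.symm hab)))
    have h2 : (e.upper k : ℕ) = (e.1.1 k : ℕ) :=
      congrArg Fin.val (upper_apply_ne (by rw [hd]; exact (Ne.symm hak)))
    rw [h1, h2]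
    have h3 : e.1.2 ≠ b := by rw [hd]; exact hab
    rw [if_neg (fun hc => h3 hc.1)]
    by_cases hm : (e.1.1 k : ℕ) = (p k : ℕ) ∧ (e.1.1 b : ℕ) ≤ (p b : ℕ)
    · rw [if_pos hm]; exact (z2_addself _).symm
    · rw [if_neg hm]; simp
  · -- direction b
    have h1 : (e.upper b : ℕ) = (e.1.1 b : ℕ) + 1 := by rw [← hd]; exact upper_apply_self e
    have h2 : (e.upper k : ℕ) = (e.1.1 k : ℕ) :=
      congrArg Fin.val (upper_apply_ne (by rw [hd]; exact (Ne.symm hbk)))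
    rw [h1, h2]
    by_cases hk' : (e.1.1 k : ℕ) = (p k : ℕ)
    · rcases Nat.lt_trichotomy (e.1.1 b : ℕ) (p b : ℕ) with hlt | heq | hgt
      · rw [if_neg (by rintro ⟨-, h', -⟩; omega), if_pos ⟨hk', by omega⟩,
          if_pos ⟨hk', by omega⟩]
        exact (z2_addself _).symm
      · rw [if_pos ⟨hd, heq, hk'⟩, if_pos ⟨hk', by omega⟩, if_neg (by rintro ⟨-, h'⟩; omega)]
        simp
      · rw [if_neg (by rintro ⟨-, h', -⟩; omega), if_neg (by rintro ⟨-, h'⟩; omega),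
          if_neg (by rintro ⟨-, h'⟩; omega)]
        simp
    · rw [if_neg (by rintro ⟨-, -, h'⟩; exact hk' h'), if_neg (by rintro ⟨h', -⟩; exact hk' h'),
        if_neg (by rintro ⟨h', -⟩; exact hk' h')]
      simp
  · exact absurd hd (hx e hxe)

include hab hak hbk htot hx hcyc in
lemma tailId (e0 : GridEdge L) (hd0 : e0.1.2 = a) :
    x e0 = F a b k x e0.1.1 + Fm a b k x e0.1.1 := by
  set p := e0.1.1 with hp
  have h := halfSum x hcyc (Finset.univ.filter
    (fun v => (v b : ℕ) = (p b : ℕ) ∧ (v k : ℕ) = (p k : ℕ) ∧ (p a : ℕ) < (v a : ℕ)))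
  have key : (∑ e : GridEdge L,
      ((if e.1.1 ∈ Finset.univ.filter (fun v => (v b : ℕ) = (p b : ℕ) ∧ (v k : ℕ) = (p k : ℕ) ∧ (p a : ℕ) < (v a : ℕ)) then x e else 0) +
       (if e.upper ∈ Finset.univ.filter (fun v => (v b : ℕ) = (p b : ℕ) ∧ (v k : ℕ) = (p k : ℕ) ∧ (p a : ℕ) < (v a : ℕ)) then x e else 0))) =
      ∑ e : GridEdge L, ((if e = e0 then x e else 0) +
        ((if (e.1.2 = b ∧ (e.1.1 b : ℕ) = (p b : ℕ) ∧ (e.1.1 k : ℕ) = (p k : ℕ) ∧ (p a : ℕ) < (e.1.1 a : ℕ)) then x e else 0) +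
         (if (e.1.2 = b ∧ (e.1.1 b : ℕ) + 1 = (p b : ℕ) ∧ (e.1.1 k : ℕ) = (p k : ℕ) ∧ (p a : ℕ) < (e.1.1 a : ℕ)) then x e else 0))) := by
    refine Finset.sum_congr rfl fun e _ => ?_
    simp only [Finset.mem_filter, Finset.mem_univ, true_and]
    by_cases hxe : x e = 0
    · simp [hxe]
    rcases htot e.1.2 with hd | hd | hd
    · -- direction a
      have h1 : (e.upper b : ℕ) = (e.1.1 b : ℕ) :=
        congrArg Fin.val (upper_apply_ne (by rw [hd]; exact (Ne.symm hab)))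
      have h2 : (e.upper k : ℕ) = (e.1.1 k : ℕ) :=
        congrArg Fin.val (upper_apply_ne (by rw [hd]; exact (Ne.symm hak)))
      have h3 : (e.upper a : ℕ) = (e.1.1 a : ℕ) + 1 := by rw [← hd]; exact upper_apply_self e
      rw [h1, h2, h3]
      have hdb : e.1.2 ≠ b := by rw [hd]; exact hab
      rw [if_neg (fun hc : _ ∧ _ => hdb hc.1), if_neg (fun hc : _ ∧ _ => hdb hc.1), add_zero, add_zero]
      by_cases hm : (e.1.1 b : ℕ) = (p b : ℕ) ∧ (e.1.1 k : ℕ) = (p k : ℕ)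
      · rcases Nat.lt_trichotomy (e.1.1 a : ℕ) (p a : ℕ) with hlt | heq | hgt
        · rw [if_neg (by rintro ⟨-, -, h'⟩; omega), if_neg (by rintro ⟨-, -, h'⟩; omega),
            if_neg (show ¬ e = e0 by rintro rfl; rw [hp] at hlt; omega)]
          simp
        · rw [if_neg (by rintro ⟨-, -, h'⟩; omega), if_pos ⟨hm.1, hm.2, by omega⟩]
          have he0 : e = e0 := by
            apply Subtype.ext
            apply Prod.ext
            · funext j
              rcases htot j with rfl | rfl | rfl
              · exact Fin.ext heq
              · exact Fin.ext hm.1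
              · exact Fin.ext hm.2
            · rw [hd, hd0]
          rw [if_pos he0]
          simp
        · rw [if_pos ⟨hm.1, hm.2, by omega⟩, if_pos ⟨hm.1, hm.2, by omega⟩,
            if_neg (show ¬ e = e0 by rintro rfl; rw [hp] at hgt; omega)]
          simp [z2_addself]
      · have hne : e ≠ e0 := by
          rintro rfl
          exact hm ⟨rfl, rfl⟩
        rw [if_neg (by rintro ⟨h', h'', -⟩; exact hm ⟨h', h''⟩),
          if_neg (by rintro ⟨h', h'', -⟩; exact hm ⟨h', h''⟩), if_neg hne]
        simp
    · -- direction b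
      have h1 : (e.upper b : ℕ) = (e.1.1 b : ℕ) + 1 := by rw [← hd]; exact upper_apply_self e
      have h2 : (e.upper k : ℕ) = (e.1.1 k : ℕ) :=
        congrArg Fin.val (upper_apply_ne (by rw [hd]; exact (Ne.symm hbk)))
      have h3 : (e.upper a : ℕ) = (e.1.1 a : ℕ) :=
        congrArg Fin.val (upper_apply_ne (by rw [hd]; exact hab))
      rw [h1, h2, h3]
      have hne : e ≠ e0 := by
        rintro rfl
        exact hab (hd0.symm.trans hd)
      rw [if_neg hne, zero_add]
      by_cases hm : (e.1.1 k : ℕ) = (p k : ℕ) ∧ (p a : ℕ) < (e.1.1 a : ℕ)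
      · congr 1
        · by_cases h' : (e.1.1 b : ℕ) = (p b : ℕ)
          · rw [if_pos ⟨h', hm.1, hm.2⟩, if_pos ⟨hd, h', hm.1, hm.2⟩]
          · rw [if_neg (by rintro ⟨h'', -⟩; exact h' h''), if_neg (by rintro ⟨-, h'', -⟩; exact h' h'')]
        · by_cases h' : (e.1.1 b : ℕ) + 1 = (p b : ℕ)
          · rw [if_pos ⟨h', hm.1, hm.2⟩, if_pos ⟨hd, h', hm.1, hm.2⟩]
          · rw [if_neg (by rintro ⟨h'', -⟩; exact h' h''), if_neg (by rintro ⟨-, h'', -⟩; exact h' h'')]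
      · rw [if_neg (by rintro ⟨-, h', h''⟩; exact hm ⟨h', h''⟩),
          if_neg (by rintro ⟨-, h', h''⟩; exact hm ⟨h', h''⟩),
          if_neg (by rintro ⟨-, -, h', h''⟩; exact hm ⟨h', h''⟩),
          if_neg (by rintro ⟨-, -, h', h''⟩; exact hm ⟨h', h''⟩)]
    · exact absurd hd (hx e hxe)
  rw [key, Finset.sum_add_distrib, Finset.sum_add_distrib,
    Finset.sum_ite_eq' Finset.univ e0] at h
  simp only [Finset.mem_univ, if_true] at h
  have hz : ∀ u v w : ZMod 2, u + (v + w) = 0 → u = v + w := by decide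
  exact hz _ _ _ h

include hab hak hbk htot in
lemma F_split (e0 : GridEdge L) (hd0 : e0.1.2 = b) :
    (∑ e : GridEdge L, if (e.1.2 = b ∧ (e.1.1 b : ℕ) = (e0.1.1 b : ℕ) ∧
        (e.1.1 k : ℕ) = (e0.1.1 k : ℕ) ∧ (e0.1.1 a : ℕ) ≤ (e.1.1 a : ℕ)) then x e else 0)
      = x e0 + F a b k x e0.1.1 := by
  have step1 : ∀ e : GridEdge L,
      (if (e.1.2 = b ∧ (e.1.1 b : ℕ) = (e0.1.1 b : ℕ) ∧
        (e.1.1 k : ℕ) = (e0.1.1 k : ℕ) ∧ (e0.1.1 a : ℕ) ≤ (e.1.1 a : ℕ)) then x e else 0) =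
      (if e = e0 then x e else 0) +
      (if (e.1.2 = b ∧ (e.1.1 b : ℕ) = (e0.1.1 b : ℕ) ∧
        (e.1.1 k : ℕ) = (e0.1.1 k : ℕ) ∧ (e0.1.1 a : ℕ) < (e.1.1 a : ℕ)) then x e else 0) := by
    intro e
    have hiff : (e.1.2 = b ∧ (e.1.1 b : ℕ) = (e0.1.1 b : ℕ) ∧
        (e.1.1 k : ℕ) = (e0.1.1 k : ℕ) ∧ (e0.1.1 a : ℕ) ≤ (e.1.1 a : ℕ)) ↔
        (e = e0 ∨ (e.1.2 = b ∧ (e.1.1 b : ℕ) = (e0.1.1 b : ℕ) ∧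
        (e.1.1 k : ℕ) = (e0.1.1 k : ℕ) ∧ (e0.1.1 a : ℕ) < (e.1.1 a : ℕ))) := by
      constructor
      · rintro ⟨hd, hb', hk', hle⟩
        rcases Nat.eq_or_lt_of_le hle with heq | hlt
        · left
          apply Subtype.ext
          apply Prod.ext
          · funext j
            rcases htot j with rfl | rfl | rfl
            · exact Fin.ext heq.symm
            · exact Fin.ext hb'
            · exact Fin.ext hk'
          · rw [hd, hd0]
        · right; exact ⟨hd, hb', hk', hlt⟩
      · rintro (rfl | ⟨hd, hb', hk', hlt⟩)
        · exact ⟨hd0, rfl, rfl, le_refl _⟩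
        · exact ⟨hd, hb', hk', le_of_lt hlt⟩
    rw [if_congr hiff rfl rfl]
    refine ite_or_split ?_
    rintro ⟨rfl, -, -, -, hlt⟩
    omega
  rw [Finset.sum_congr rfl (fun e _ => step1 e), Finset.sum_add_distrib,
    Finset.sum_ite_eq' Finset.univ e0]
  simp only [Finset.mem_univ, if_true]
  rfl

include hab hak hbk htot in
lemma F_step (e0 : GridEdge L) (hd0 : e0.1.2 = b) (t : Fin L)
    (ht : (t : ℕ) + 1 = (e0.1.1 a : ℕ)) :
    F a b k x (Function.update e0.1.1 a t) = x e0 + F a b k x e0.1.1 := by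
  rw [← F_split hab hak hbk htot e0 hd0]
  unfold F
  refine Finset.sum_congr rfl fun e _ => ?_
  refine if_congr ?_ rfl rfl
  have h1 : (Function.update e0.1.1 a t) b = e0.1.1 b := Function.update_of_ne (Ne.symm hab) _ _
  have h2 : (Function.update e0.1.1 a t) k = e0.1.1 k := Function.update_of_ne (Ne.symm hak) _ _
  have h3 : (Function.update e0.1.1 a t) a = t := Function.update_self _ _ _
  rw [h1, h2, h3]
  constructor
  · rintro ⟨hd, hb', hk', hlt⟩; exact ⟨hd, hb', hk', by omega⟩
  · rintro ⟨hd, hb', hk', hle⟩; exact ⟨hd, hb', hk', by omega⟩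

include hab hak hbk htot hx hcyc in
lemma vertId (e0 : GridEdge L) (hd0 : e0.1.2 = b) (hpa : (e0.1.1 a : ℕ) = 0) :
    x e0 = F a b k x e0.1.1 := by
  have h := rowId hab hak hbk htot hx hcyc e0.1.1
  have h2 := F_split hab hak hbk htot (x := x) e0 hd0
  have h3 : (∑ e : GridEdge L, if (e.1.2 = b ∧ (e.1.1 b : ℕ) = (e0.1.1 b : ℕ) ∧
        (e.1.1 k : ℕ) = (e0.1.1 k : ℕ) ∧ (e0.1.1 a : ℕ) ≤ (e.1.1 a : ℕ)) then x e else 0) =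
      (∑ e : GridEdge L, if (e.1.2 = b ∧ (e.1.1 b : ℕ) = (e0.1.1 b : ℕ) ∧
        (e.1.1 k : ℕ) = (e0.1.1 k : ℕ)) then x e else 0) := by
    refine Finset.sum_congr rfl fun e _ => ?_
    refine if_congr ?_ rfl rfl
    constructor
    · rintro ⟨hd, hb', hk', -⟩; exact ⟨hd, hb', hk'⟩
    · rintro ⟨hd, hb', hk'⟩; exact ⟨hd, hb', hk', by omega⟩
  have h5 : x e0 + F a b k x e0.1.1 = 0 := by rw [← h2, h3]; exact h
  have hz : ∀ u v : ZMod 2, u + v = 0 → u = v := by decide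
  exact hz _ _ h5

include hab hak hbk in
lemma Fm_eq (p : Fin 3 → Fin L) (t : Fin L) (ht : (t : ℕ) + 1 = (p b : ℕ)) :
    Fm a b k x p = F a b k x (Function.update p b t) := by
  unfold F Fm
  refine Finset.sum_congr rfl fun e _ => ?_
  refine if_congr ?_ rfl rfl
  have h1 : (Function.update p b t) b = t := Function.update_self _ _ _
  have h2 : (Function.update p b t) k = p k := Function.update_of_ne (Ne.symm hbk) _ _
  have h3 : (Function.update p b t) a = p a := Function.update_of_ne hab _ _
  rw [h1, h2, h3]
  constructor
  · rintro ⟨hd, hb', hk', hlt⟩; exact ⟨hd, by omega, hk', hlt⟩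
  · rintro ⟨hd, hb', hk', hle⟩; exact ⟨hd, by omega, hk', hle⟩

lemma Fm_zero (p : Fin 3 → Fin L) (hp : (p b : ℕ) = 0) : Fm a b k x p = 0 := by
  unfold Fm
  refine Finset.sum_eq_zero fun e _ => ?_
  rw [if_neg]
  rintro ⟨-, hb', -, -⟩
  omega

lemma F_top (p : Fin 3 → Fin L) (hp : L ≤ (p b : ℕ) + 1) : F a b k x p = 0 := by
  unfold F
  refine Finset.sum_eq_zero fun e _ => ?_
  rw [if_neg]
  rintro ⟨hd, hb', -, -⟩
  have := e.2
  rw [hd] at this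
  omega

lemma F_right (p : Fin 3 → Fin L) (hp : L ≤ (p a : ℕ) + 1) : F a b k x p = 0 := by
  unfold F
  refine Finset.sum_eq_zero fun e _ => ?_
  rw [if_neg]
  rintro ⟨-, -, -, hlt⟩
  have := (e.1.1 a).isLt
  omega

end Plane

/-! ### Section E: filling a cycle inside a plane -/

noncomputable def lowPt (p : Fin 3 → Fin L) (j : Fin 3) : Fin 3 → Fin L :=
  Function.update p j ⟨(p j : ℕ) - 1, by have := (p j).isLt; omega⟩

lemma lowPt_same (p : Fin 3 → Fin L) (j : Fin 3) : ((lowPt p j) j : ℕ) = (p j : ℕ) - 1 := by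
  simp [lowPt]

lemma lowPt_other (p : Fin 3 → Fin L) (j j' : Fin 3) (h : j' ≠ j) : (lowPt p j) j' = p j' := by
  simp [lowPt, Function.update_of_ne h]

lemma stepAt_iff (j : Fin 3) (P u : Fin 3 → Fin L) :
    stepAt j P u ↔ (1 ≤ (u j : ℕ) ∧ P = lowPt u j) := by
  constructor
  · rintro ⟨h1, h2⟩
    refine ⟨by omega, ?_⟩
    funext j'
    by_cases hj : j' = j
    · subst hj
      apply Fin.ext
      rw [lowPt_same]
      omega
    · rw [lowPt_other u j j' hj]
      exact (h1 j' hj).symm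
  · rintro ⟨h1, rfl⟩
    refine ⟨fun j' hj => (lowPt_other u j j' hj).symm, ?_⟩
    rw [lowPt_same]
    omega

lemma ite_ite {P Q : Prop} {v : ZMod 2} :
    (if P then (if Q then v else 0) else 0) = if P ∧ Q then v else 0 := by
  by_cases hP : P <;> by_cases hQ : Q <;> simp_all

section Plane2

variable {a b k : Fin 3} {x : GridEdge L → ZMod 2}
variable (hab : a ≠ b) (hak : a ≠ k) (hbk : b ≠ k)
variable (htot : ∀ j : Fin 3, j = a ∨ j = b ∨ j = k)

include hab hak hbk htot in
lemma sq_sum (P : Fin 3 → Fin L) (f : (Fin 3 → Fin L) → ZMod 2) :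
    (∑ s : GridSquare L, if (s.1.1 = P ∧ s.1.2.1 = a ∧ s.1.2.2 = b) then f s.1.1 else 0)
    = if (a < b ∧ (P a : ℕ) + 1 < L ∧ (P b : ℕ) + 1 < L) then f P else 0 := by
  by_cases hc : a < b ∧ (P a : ℕ) + 1 < L ∧ (P b : ℕ) + 1 < L
  · rw [if_pos hc]
    set s0 : GridSquare L := ⟨(P, a, b), hc⟩ with hs0
    have hiff : ∀ s : GridSquare L, (s.1.1 = P ∧ s.1.2.1 = a ∧ s.1.2.2 = b) ↔ s = s0 := by
      intro s
      constructor
      · rintro ⟨h1, h2, h3⟩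
        apply Subtype.ext
        apply Prod.ext
        · exact h1
        · apply Prod.ext
          · exact h2
          · exact h3
      · rintro rfl
        exact ⟨rfl, rfl, rfl⟩
    rw [Finset.sum_congr rfl (fun s _ => if_congr (hiff s) rfl rfl),
      Finset.sum_ite_eq' Finset.univ s0]
    simp [hs0]
  · rw [if_neg hc]
    refine Finset.sum_eq_zero fun s _ => ?_
    rw [if_neg]
    rintro ⟨h1, h2, h3⟩
    exact hc (by rw [← h1, ← h2, ← h3]; exact s.2)

lemma bdry_char (s : GridSquare L) (e : GridEdge L) (h1 : s.1.2.1 = a) (h2 : s.1.2.2 = b) :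
    s.bdryEdge e ↔ ((e.1.1 = s.1.1 ∧ (e.1.2 = a ∨ e.1.2 = b)) ∨
      (e.1.2 = a ∧ (1 ≤ (e.1.1 b : ℕ) ∧ s.1.1 = lowPt e.1.1 b)) ∨
      (e.1.2 = b ∧ (1 ≤ (e.1.1 a : ℕ) ∧ s.1.1 = lowPt e.1.1 a))) := by
  unfold GridSquare.bdryEdge
  rw [h1, h2, stepAt_iff, stepAt_iff]

end Plane2

section Plane3

variable {a b k : Fin 3} {x : GridEdge L → ZMod 2}
variable (hab : a ≠ b) (hak : a ≠ k) (hbk : b ≠ k) (hord : a < b)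
variable (htot : ∀ j : Fin 3, j = a ∨ j = b ∨ j = k)
variable (hx : ∀ e : GridEdge L, x e ≠ 0 → e.1.2 ≠ k)
variable (hcyc : d1 L x = 0)

include hab hak hbk in
lemma Fm_eq_low (p : Fin 3 → Fin L) (h1 : 1 ≤ (p b : ℕ)) :
    Fm a b k x p = F a b k x (lowPt p b) := by
  have := Fm_eq hab hak hbk (x := x) p ⟨(p b : ℕ) - 1, by have := (p b).isLt; omega⟩
    (by show (p b : ℕ) - 1 + 1 = (p b : ℕ); omega)
  rw [this]
  rfl

include hab hak hbk htot in
lemma F_step_low (e0 : GridEdge L) (hd0 : e0.1.2 = b) (h1 : 1 ≤ (e0.1.1 a : ℕ)) :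
    F a b k x (lowPt e0.1.1 a) = x e0 + F a b k x e0.1.1 := by
  have := F_step hab hak hbk htot (x := x) e0 hd0
    ⟨(e0.1.1 a : ℕ) - 1, by have := (e0.1.1 a).isLt; omega⟩
    (by show (e0.1.1 a : ℕ) - 1 + 1 = (e0.1.1 a : ℕ); omega)
  rw [← this]
  rfl

include hab hak hbk hord htot hx hcyc in
lemma planeFill (c : Fin L)
    (hx2 : ∀ e : GridEdge L, x e ≠ 0 → e.1.1 k = c) :
    ∃ y : GridSquare L → ZMod 2,
      (∀ s, y s ≠ 0 → s.1.2.1 = a ∧ s.1.2.2 = b ∧ s.1.1 k = c) ∧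
      d2 L y = x := by
  classical
  set y : GridSquare L → ZMod 2 := fun s =>
    if (s.1.2.1 = a ∧ s.1.2.2 = b ∧ s.1.1 k = c) then F a b k x s.1.1 else 0 with hy
  have yzero : ∀ s : GridSquare L, ¬(s.1.2.1 = a ∧ s.1.2.2 = b ∧ s.1.1 k = c) → y s = 0 := by
    intro s h
    simp only [hy]
    rw [if_neg h]
  refine ⟨y, fun s hs => ?_, ?_⟩
  · by_contra hc
    exact hs (yzero s hc)
  funext e
  show (∑ s : GridSquare L, if s.bdryEdge e then y s else 0) = x e
  rcases htot e.1.2 with hd | hd | hd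
  · -- direction a
    by_cases hkc : e.1.1 k = c
    · -- main case
      have he2 : (e.1.1 a : ℕ) + 1 < L := by have h' := e.2; rw [hd] at h'; exact h'
      have hFeq : (if (a < b ∧ (e.1.1 a : ℕ) + 1 < L ∧ (e.1.1 b : ℕ) + 1 < L)
          then F a b k x e.1.1 else 0) = F a b k x e.1.1 := by
        by_cases h' : (e.1.1 b : ℕ) + 1 < L
        · rw [if_pos ⟨hord, he2, h'⟩]
        · rw [if_neg (fun hcc => h' hcc.2.2)]
          exact (F_top (a := a) (b := b) (k := k) (x := x) _ (by omega)).symm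
      by_cases hb1 : 1 ≤ (e.1.1 b : ℕ)
      · -- two candidate squares
        have point : ∀ s : GridSquare L, (if s.bdryEdge e then y s else 0) =
            (if (s.1.1 = e.1.1 ∧ s.1.2.1 = a ∧ s.1.2.2 = b) then F a b k x s.1.1 else 0) +
            (if (s.1.1 = lowPt e.1.1 b ∧ s.1.2.1 = a ∧ s.1.2.2 = b) then F a b k x s.1.1 else 0) := by
          intro s
          by_cases hdirs : s.1.2.1 = a ∧ s.1.2.2 = b
          · have hchar := bdry_char s e hdirs.1 hdirs.2
            by_cases hbd : s.bdryEdge e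
            · rw [if_pos hbd]
              rcases hchar.mp hbd with ⟨h11, -⟩ | ⟨-, -, h11⟩ | ⟨hdd, -⟩
              · have hkcs : s.1.1 k = c := by rw [← h11]; exact hkc
                have hne : ¬(s.1.1 = lowPt e.1.1 b ∧ s.1.2.1 = a ∧ s.1.2.2 = b) := by
                  rintro ⟨h2, -⟩
                  have hbb : (e.1.1 b : ℕ) = ((lowPt e.1.1 b) b : ℕ) :=
                    congrArg (fun f : Fin 3 → Fin L => (f b : ℕ)) (h11.trans h2)
                  rw [lowPt_same] at hbb
                  omega
                rw [if_pos ⟨h11.symm, hdirs.1, hdirs.2⟩, if_neg hne, add_zero]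
                simp only [hy]
                rw [if_pos ⟨hdirs.1, hdirs.2, hkcs⟩]
              · have hkcs : s.1.1 k = c := by
                  rw [h11, lowPt_other e.1.1 b k (Ne.symm hbk)]; exact hkc
                have hne : ¬(s.1.1 = e.1.1 ∧ s.1.2.1 = a ∧ s.1.2.2 = b) := by
                  rintro ⟨h2, -⟩
                  have hbb : (e.1.1 b : ℕ) = ((lowPt e.1.1 b) b : ℕ) :=
                    congrArg (fun f : Fin 3 → Fin L => (f b : ℕ)) (h2.symm.trans h11)
                  rw [lowPt_same] at hbb
                  omega
                rw [if_neg hne, zero_add, if_pos ⟨h11, hdirs.1, hdirs.2⟩]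
                simp only [hy]
                rw [if_pos ⟨hdirs.1, hdirs.2, hkcs⟩]
              · exact absurd (hd.symm.trans hdd) hab
            · have hn1 : ¬(s.1.1 = e.1.1 ∧ s.1.2.1 = a ∧ s.1.2.2 = b) := by
                rintro ⟨h2, -⟩
                exact hbd (hchar.mpr (Or.inl ⟨h2.symm, Or.inl hd⟩))
              have hn2 : ¬(s.1.1 = lowPt e.1.1 b ∧ s.1.2.1 = a ∧ s.1.2.2 = b) := by
                rintro ⟨h2, -⟩
                exact hbd (hchar.mpr (Or.inr (Or.inl ⟨hd, hb1, h2⟩)))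
              rw [if_neg hbd, if_neg hn1, if_neg hn2, add_zero]
          · have h1 : ¬(s.1.1 = e.1.1 ∧ s.1.2.1 = a ∧ s.1.2.2 = b) := fun hcc => hdirs ⟨hcc.2.1, hcc.2.2⟩
            have h2 : ¬(s.1.1 = lowPt e.1.1 b ∧ s.1.2.1 = a ∧ s.1.2.2 = b) := fun hcc => hdirs ⟨hcc.2.1, hcc.2.2⟩
            rw [if_neg h1, if_neg h2, yzero s (fun hcc => hdirs ⟨hcc.1, hcc.2.1⟩), add_zero]
            simp
        rw [Finset.sum_congr rfl (fun s _ => point s), Finset.sum_add_distrib,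
          sq_sum hab hak hbk htot e.1.1 (F a b k x),
          sq_sum hab hak hbk htot (lowPt e.1.1 b) (F a b k x), hFeq]
        have c2 : a < b ∧ ((lowPt e.1.1 b) a : ℕ) + 1 < L ∧ ((lowPt e.1.1 b) b : ℕ) + 1 < L := by
          refine ⟨hord, ?_, ?_⟩
          · rw [lowPt_other e.1.1 b a hab]; exact he2
          · rw [lowPt_same]; have := (e.1.1 b).isLt; omega
        rw [if_pos c2]
        have htail := tailId hab hak hbk htot hx hcyc e hd
        rw [Fm_eq_low hab hak hbk e.1.1 hb1] at htail
        exact htail.symm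
      · -- e.1.1 b = 0 : single candidate square
        have point : ∀ s : GridSquare L, (if s.bdryEdge e then y s else 0) =
            (if (s.1.1 = e.1.1 ∧ s.1.2.1 = a ∧ s.1.2.2 = b) then F a b k x s.1.1 else 0) := by
          intro s
          by_cases hdirs : s.1.2.1 = a ∧ s.1.2.2 = b
          · have hchar := bdry_char s e hdirs.1 hdirs.2
            by_cases hbd : s.bdryEdge e
            · rw [if_pos hbd]
              rcases hchar.mp hbd with ⟨h11, -⟩ | ⟨-, hb1', -⟩ | ⟨hdd, -⟩
              · have hkcs : s.1.1 k = c := by rw [← h11]; exact hkc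
                rw [if_pos ⟨h11.symm, hdirs.1, hdirs.2⟩]
                simp only [hy]
                rw [if_pos ⟨hdirs.1, hdirs.2, hkcs⟩]
              · exact absurd hb1' hb1
              · exact absurd (hd.symm.trans hdd) hab
            · have hn1 : ¬(s.1.1 = e.1.1 ∧ s.1.2.1 = a ∧ s.1.2.2 = b) := by
                rintro ⟨h2, -⟩
                exact hbd (hchar.mpr (Or.inl ⟨h2.symm, Or.inl hd⟩))
              rw [if_neg hbd, if_neg hn1]
          · have h1 : ¬(s.1.1 = e.1.1 ∧ s.1.2.1 = a ∧ s.1.2.2 = b) := fun hcc => hdirs ⟨hcc.2.1, hcc.2.2⟩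
            rw [if_neg h1, yzero s (fun hcc => hdirs ⟨hcc.1, hcc.2.1⟩)]
            simp
        rw [Finset.sum_congr rfl (fun s _ => point s),
          sq_sum hab hak hbk htot e.1.1 (F a b k x), hFeq]
        have htail := tailId hab hak hbk htot hx hcyc e hd
        rw [Fm_zero (a := a) (b := b) (k := k) (x := x) e.1.1 (by omega), add_zero] at htail
        exact htail.symm
    · -- off-plane: both sides vanish
      have hx0 : x e = 0 := by
        by_contra h
        exact hkc (hx2 e h)
      rw [hx0]
      refine Finset.sum_eq_zero fun s _ => ?_
      by_cases hdirs : s.1.2.1 = a ∧ s.1.2.2 = b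
      · by_cases hbd : s.bdryEdge e
        · rw [if_pos hbd]
          rcases (bdry_char s e hdirs.1 hdirs.2).mp hbd with ⟨h11, -⟩ | ⟨-, -, h11⟩ | ⟨hdd, -⟩
          · exact yzero s (fun hcc => hkc (by rw [h11]; exact hcc.2.2))
          · exact yzero s (fun hcc => hkc (by
              rw [← lowPt_other e.1.1 b k (Ne.symm hbk), ← h11]; exact hcc.2.2))
          · exact absurd (hd.symm.trans hdd) hab
        · rw [if_neg hbd]
      · rw [yzero s (fun hcc => hdirs ⟨hcc.1, hcc.2.1⟩)]
        simp
  · -- direction b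
    by_cases hkc : e.1.1 k = c
    · have he2 : (e.1.1 b : ℕ) + 1 < L := by have h' := e.2; rw [hd] at h'; exact h'
      have hFeq : (if (a < b ∧ (e.1.1 a : ℕ) + 1 < L ∧ (e.1.1 b : ℕ) + 1 < L)
          then F a b k x e.1.1 else 0) = F a b k x e.1.1 := by
        by_cases h' : (e.1.1 a : ℕ) + 1 < L
        · rw [if_pos ⟨hord, h', he2⟩]
        · rw [if_neg (fun hcc => h' hcc.2.1)]
          exact (F_right (a := a) (b := b) (k := k) (x := x) _ (by omega)).symm
      by_cases ha1 : 1 ≤ (e.1.1 a : ℕ)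
      · have point : ∀ s : GridSquare L, (if s.bdryEdge e then y s else 0) =
            (if (s.1.1 = e.1.1 ∧ s.1.2.1 = a ∧ s.1.2.2 = b) then F a b k x s.1.1 else 0) +
            (if (s.1.1 = lowPt e.1.1 a ∧ s.1.2.1 = a ∧ s.1.2.2 = b) then F a b k x s.1.1 else 0) := by
          intro s
          by_cases hdirs : s.1.2.1 = a ∧ s.1.2.2 = b
          · have hchar := bdry_char s e hdirs.1 hdirs.2
            by_cases hbd : s.bdryEdge e
            · rw [if_pos hbd]
              rcases hchar.mp hbd with ⟨h11, -⟩ | ⟨hdd, -⟩ | ⟨-, -, h11⟩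
              · have hkcs : s.1.1 k = c := by rw [← h11]; exact hkc
                have hne : ¬(s.1.1 = lowPt e.1.1 a ∧ s.1.2.1 = a ∧ s.1.2.2 = b) := by
                  rintro ⟨h2, -⟩
                  have hbb : (e.1.1 a : ℕ) = ((lowPt e.1.1 a) a : ℕ) :=
                    congrArg (fun f : Fin 3 → Fin L => (f a : ℕ)) (h11.trans h2)
                  rw [lowPt_same] at hbb
                  omega
                rw [if_pos ⟨h11.symm, hdirs.1, hdirs.2⟩, if_neg hne, add_zero]
                simp only [hy]
                rw [if_pos ⟨hdirs.1, hdirs.2, hkcs⟩]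
              · exact absurd (hd.symm.trans hdd) (Ne.symm hab)
              · have hkcs : s.1.1 k = c := by
                  rw [h11, lowPt_other e.1.1 a k (Ne.symm hak)]; exact hkc
                have hne : ¬(s.1.1 = e.1.1 ∧ s.1.2.1 = a ∧ s.1.2.2 = b) := by
                  rintro ⟨h2, -⟩
                  have hbb : (e.1.1 a : ℕ) = ((lowPt e.1.1 a) a : ℕ) :=
                    congrArg (fun f : Fin 3 → Fin L => (f a : ℕ)) (h2.symm.trans h11)
                  rw [lowPt_same] at hbb
                  omega
                rw [if_neg hne, zero_add, if_pos ⟨h11, hdirs.1, hdirs.2⟩]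
                simp only [hy]
                rw [if_pos ⟨hdirs.1, hdirs.2, hkcs⟩]
            · have hn1 : ¬(s.1.1 = e.1.1 ∧ s.1.2.1 = a ∧ s.1.2.2 = b) := by
                rintro ⟨h2, -⟩
                exact hbd (hchar.mpr (Or.inl ⟨h2.symm, Or.inr hd⟩))
              have hn2 : ¬(s.1.1 = lowPt e.1.1 a ∧ s.1.2.1 = a ∧ s.1.2.2 = b) := by
                rintro ⟨h2, -⟩
                exact hbd (hchar.mpr (Or.inr (Or.inr ⟨hd, ha1, h2⟩)))
              rw [if_neg hbd, if_neg hn1, if_neg hn2, add_zero]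
          · have h1 : ¬(s.1.1 = e.1.1 ∧ s.1.2.1 = a ∧ s.1.2.2 = b) := fun hcc => hdirs ⟨hcc.2.1, hcc.2.2⟩
            have h2 : ¬(s.1.1 = lowPt e.1.1 a ∧ s.1.2.1 = a ∧ s.1.2.2 = b) := fun hcc => hdirs ⟨hcc.2.1, hcc.2.2⟩
            rw [if_neg h1, if_neg h2, yzero s (fun hcc => hdirs ⟨hcc.1, hcc.2.1⟩), add_zero]
            simp
        rw [Finset.sum_congr rfl (fun s _ => point s), Finset.sum_add_distrib,
          sq_sum hab hak hbk htot e.1.1 (F a b k x),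
          sq_sum hab hak hbk htot (lowPt e.1.1 a) (F a b k x), hFeq]
        have c2 : a < b ∧ ((lowPt e.1.1 a) a : ℕ) + 1 < L ∧ ((lowPt e.1.1 a) b : ℕ) + 1 < L := by
          refine ⟨hord, ?_, ?_⟩
          · rw [lowPt_same]; have := (e.1.1 a).isLt; omega
          · rw [lowPt_other e.1.1 a b (Ne.symm hab)]; exact he2
        rw [if_pos c2, F_step_low hab hak hbk htot e hd ha1]
        have hcan : ∀ u v : ZMod 2, u + (v + u) = v := by decide
        exact hcan _ _
      · have point : ∀ s : GridSquare L, (if s.bdryEdge e then y s else 0) =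
            (if (s.1.1 = e.1.1 ∧ s.1.2.1 = a ∧ s.1.2.2 = b) then F a b k x s.1.1 else 0) := by
          intro s
          by_cases hdirs : s.1.2.1 = a ∧ s.1.2.2 = b
          · have hchar := bdry_char s e hdirs.1 hdirs.2
            by_cases hbd : s.bdryEdge e
            · rw [if_pos hbd]
              rcases hchar.mp hbd with ⟨h11, -⟩ | ⟨hdd, -⟩ | ⟨-, ha1', -⟩
              · have hkcs : s.1.1 k = c := by rw [← h11]; exact hkc
                rw [if_pos ⟨h11.symm, hdirs.1, hdirs.2⟩]
                simp only [hy]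
                rw [if_pos ⟨hdirs.1, hdirs.2, hkcs⟩]
              · exact absurd (hd.symm.trans hdd) (Ne.symm hab)
              · exact absurd ha1' ha1
            · have hn1 : ¬(s.1.1 = e.1.1 ∧ s.1.2.1 = a ∧ s.1.2.2 = b) := by
                rintro ⟨h2, -⟩
                exact hbd (hchar.mpr (Or.inl ⟨h2.symm, Or.inr hd⟩))
              rw [if_neg hbd, if_neg hn1]
          · have h1 : ¬(s.1.1 = e.1.1 ∧ s.1.2.1 = a ∧ s.1.2.2 = b) := fun hcc => hdirs ⟨hcc.2.1, hcc.2.2⟩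
            rw [if_neg h1, yzero s (fun hcc => hdirs ⟨hcc.1, hcc.2.1⟩)]
            simp
        rw [Finset.sum_congr rfl (fun s _ => point s),
          sq_sum hab hak hbk htot e.1.1 (F a b k x)]
        have hc1 : a < b ∧ (e.1.1 a : ℕ) + 1 < L ∧ (e.1.1 b : ℕ) + 1 < L :=
          ⟨hord, by omega, he2⟩
        rw [if_pos hc1]
        exact (vertId hab hak hbk htot hx hcyc e hd (by omega)).symm
    · have hx0 : x e = 0 := by
        by_contra h
        exact hkc (hx2 e h)
      rw [hx0]
      refine Finset.sum_eq_zero fun s _ => ?_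
      by_cases hdirs : s.1.2.1 = a ∧ s.1.2.2 = b
      · by_cases hbd : s.bdryEdge e
        · rw [if_pos hbd]
          rcases (bdry_char s e hdirs.1 hdirs.2).mp hbd with ⟨h11, -⟩ | ⟨hdd, -⟩ | ⟨-, -, h11⟩
          · exact yzero s (fun hcc => hkc (by rw [h11]; exact hcc.2.2))
          · exact absurd (hd.symm.trans hdd) (Ne.symm hab)
          · exact yzero s (fun hcc => hkc (by
              rw [← lowPt_other e.1.1 a k (Ne.symm hak), ← h11]; exact hcc.2.2))
        · rw [if_neg hbd]
      · rw [yzero s (fun hcc => hdirs ⟨hcc.1, hcc.2.1⟩)]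
        simp
  · -- direction k: no adjacent squares in the plane and x e = 0
    have hx0 : x e = 0 := by
      by_contra h
      exact (hx e h) hd
    rw [hx0]
    refine Finset.sum_eq_zero fun s _ => ?_
    by_cases hdirs : s.1.2.1 = a ∧ s.1.2.2 = b
    · by_cases hbd : s.bdryEdge e
      · exfalso
        rcases (bdry_char s e hdirs.1 hdirs.2).mp hbd with ⟨-, hdd | hdd⟩ | ⟨hdd, -⟩ | ⟨hdd, -⟩
        · exact hak (hdd.symm.trans hd)
        · exact hbk (hdd.symm.trans hd)
        · exact hak (hdd.symm.trans hd)
        · exact hbk (hdd.symm.trans hd)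
      · rw [if_neg hbd]
    · rw [yzero s (fun hcc => hdirs ⟨hcc.1, hcc.2.1⟩)]
      simp
end Plane3

/-! ### Section F: star planes and edge classification -/

lemma star_of_eq {q v : Fin 3 → Fin L} (j : Fin 3) (h : v j = q j) :
    v ∈ starPlane q := by
  have hothers : ∃ j1 j2 : Fin 3, j1 ≠ j2 ∧ ∀ i : Fin 3, i = j ∨ i = j1 ∨ i = j2 := by
    fin_cases j
    · exact ⟨1, 2, by decide, by decide⟩
    · exact ⟨0, 2, by decide, by decide⟩
    · exact ⟨0, 1, by decide, by decide⟩
  obtain ⟨j1, j2, hne, hcov⟩ := hothers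
  have hsub : { k : Fin 3 | v k ≠ q k } ⊆ {j1, j2} := by
    intro i hi
    rcases hcov i with rfl | rfl | rfl
    · exact absurd h hi
    · exact Set.mem_insert _ _
    · exact Set.mem_insert_iff.mpr (Or.inr rfl)
  calc Set.ncard { k : Fin 3 | v k ≠ q k } ≤ Set.ncard ({j1, j2} : Set (Fin 3)) :=
        Set.ncard_le_ncard hsub (Set.toFinite _)
    _ = 2 := Set.ncard_pair hne
  
lemma star_exists_eq {q v : Fin 3 → Fin L} (h : v ∈ starPlane q) :
    ∃ j : Fin 3, v j = q j := by
  by_contra hc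
  push_neg at hc
  have huniv : { k : Fin 3 | v k ≠ q k } = Set.univ := by
    ext i; simp [hc i]
  have := h
  unfold starPlane at this
  rw [Set.mem_setOf_eq, huniv, Set.ncard_univ] at this
  simp [Nat.card_eq_fintype_card] at this

lemma edge_classify {q : Fin 3 → Fin L} (e : GridEdge L)
    (h1 : e.1.1 ∈ starPlane q) (h2 : e.upper ∈ starPlane q) :
    ∃ j : Fin 3, j ≠ e.1.2 ∧ e.1.1 j = q j := by
  by_cases hex : ∃ j : Fin 3, j ≠ e.1.2 ∧ e.1.1 j = q j
  · exact hex
  push_neg at hex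
  obtain ⟨j1, hj1⟩ := star_exists_eq h1
  obtain ⟨j2, hj2⟩ := star_exists_eq h2
  by_cases hj2d : j2 = e.1.2
  · subst hj2d
    have hj1d : j1 = e.1.2 := by
      by_contra hc
      exact (hex j1 hc) hj1
    subst hj1d
    have := upper_apply_self e
    rw [hj2, hj1] at this
    omega
  · exfalso
    refine (hex j2 hj2d) ?_
    rw [← hj2, upper_apply_ne hj2d]

/-! ### Section G: planes, good edges, routing -/

/-- An edge lies in the plane `coordinate l = c`. -/
def EP (l : Fin 3) (c : Fin L) (e : GridEdge L) : Prop :=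
  e.1.1 l = c ∧ e.upper l = c

/-- A square lies in the plane `coordinate l = c`. -/
def SP (l : Fin 3) (c : Fin L) (s : GridSquare L) : Prop :=
  s.1.1 l = c ∧ s.1.2.1 ≠ l ∧ s.1.2.2 ≠ l

lemma EP_of {l : Fin 3} {c : Fin L} {e : GridEdge L} (hl : e.1.2 ≠ l)
    (h : e.1.1 l = c) : EP l c e :=
  ⟨h, by rw [upper_apply_ne (Ne.symm hl)]; exact h⟩

lemma EP_dir {l : Fin 3} {c : Fin L} {e : GridEdge L} (h : EP l c e) : e.1.2 ≠ l := by
  intro hc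
  obtain ⟨h1, h2⟩ := h
  have := upper_apply_self e
  rw [hc, h1, h2] at this
  omega

lemma EP_endpoint {l : Fin 3} {c : Fin L} {e : GridEdge L} (h : EP l c e)
    {v : Fin 3 → Fin L} (hv : e.endpoint v) : v l = c := by
  rcases hv with rfl | rfl
  · exact h.1
  · exact h.2

lemma sum_d1 (z : GridEdge L → ZMod 2) : (∑ v, d1 L z v) = 0 := by
  simp only [d1]
  rw [Finset.sum_comm]
  refine Finset.sum_eq_zero fun e _ => ?_
  have hsplit : ∀ v : Fin 3 → Fin L, (if e.endpoint v then z e else 0) =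
      (if v = e.1.1 then z e else 0) + (if v = e.upper then z e else 0) := by
    intro v
    unfold GridEdge.endpoint
    refine ite_or_split (P := v = e.1.1) (Q := v = e.upper) ?_
    rintro ⟨rfl, h2⟩
    exact lower_ne_upper e h2
  rw [Finset.sum_congr rfl (fun v _ => hsplit v), Finset.sum_add_distrib,
    Finset.sum_ite_eq' Finset.univ e.1.1, Finset.sum_ite_eq' Finset.univ e.upper]
  simp [z2_addself]

lemma moveChain (u : Fin 3 → Fin L) (d : Fin 3) (t : Fin L)
    (l1 : Fin 3) (c1 : Fin L) (l2 : Fin 3) (c2 : Fin L)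
    (h1 : l1 ≠ d) (h2 : l2 ≠ d) (hu1 : u l1 = c1) (hu2 : u l2 = c2) :
    ∃ z, d1 L z = dl u + dl (Function.update u d t) ∧
      ∀ e, z e ≠ 0 → EP l1 c1 e ∧ EP l2 c2 e := by
  obtain ⟨z, hz, hs⟩ := lineChain u d t
  refine ⟨z, hz, fun e he => ?_⟩
  obtain ⟨hdz, hcoord⟩ := hs e he
  constructor
  · refine EP_of (by rw [hdz]; exact Ne.symm h1) ?_
    rw [hcoord l1 h1]; exact hu1
  · refine EP_of (by rw [hdz]; exact Ne.symm h2) ?_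
    rw [hcoord l2 h2]; exact hu2

lemma chain_comp {u v g : Fin 3 → Fin L} {z1 z2 : GridEdge L → ZMod 2}
    (h1 : d1 L z1 = dl u + dl g) (h2 : d1 L z2 = dl v + dl g) :
    d1 L (z1 + z2) = dl u + dl v := by
  rw [d1_add, h1, h2]
  funext w
  simp only [Pi.add_apply]
  have : ∀ p q r : ZMod 2, (p + q) + (r + q) = p + r := by decide
  exact this _ _ _

lemma supp_add {z1 z2 : GridEdge L → ZMod 2} {P : GridEdge L → Prop}
    (h1 : ∀ e, z1 e ≠ 0 → P e) (h2 : ∀ e, z2 e ≠ 0 → P e) :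
    ∀ e, (z1 + z2) e ≠ 0 → P e := by
  intro e he
  by_cases hz : z1 e = 0
  · exact h2 e (fun hz2 => he (by simp [Pi.add_apply, hz, hz2]))
  · exact h1 e hz

/-- Two-leg route from `u` to a point, staying in the plane `(kP, cP)` and in
one of the planes `(A1, a1)`, `(A2, a2)`. -/
lemma twoLeg (u : Fin 3 → Fin L) (d1' d2' : Fin 3) (t1 t2 : Fin L)
    (kP : Fin 3) (cP : Fin L) (A1 : Fin 3) (a1 : Fin L) (A2 : Fin 3) (a2 : Fin L)
    (hP1 : kP ≠ d1') (hP2 : kP ≠ d2') (huP : u kP = cP)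
    (h11 : A1 ≠ d1') (hu1 : u A1 = a1)
    (h22 : A2 ≠ d2') (hmid : Function.update u d1' t1 A2 = a2) :
    ∃ z, d1 L z = dl u + dl (Function.update (Function.update u d1' t1) d2' t2) ∧
      ∀ e, z e ≠ 0 → (EP kP cP e ∧ (EP A1 a1 e ∨ EP A2 a2 e)) := by
  obtain ⟨z1, hz1, hs1⟩ := moveChain u d1' t1 kP cP A1 a1 hP1 h11 huP hu1
  have huP' : (Function.update u d1' t1) kP = cP := by
    rw [Function.update_of_ne hP1]; exact huP
  obtain ⟨z2, hz2, hs2⟩ := moveChain (Function.update u d1' t1) d2' t2 kP cP A2 a2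
    hP2 h22 huP' hmid
  refine ⟨z1 + z2, ?_, ?_⟩
  · rw [d1_add, hz1, hz2]
    funext w
    simp only [Pi.add_apply]
    have hzz : ∀ p q s : ZMod 2, (p + q) + (q + s) = p + s := by decide
    exact hzz _ _ _
  · refine supp_add (fun e he => ?_) (fun e he => ?_)
    · exact ⟨(hs1 e he).1, Or.inl (hs1 e he).2⟩
    · exact ⟨(hs2 e he).1, Or.inr (hs2 e he).2⟩

/-! ### Section H: main induction over planes -/

def plC (j : ℕ) : Fin 3 := ⟨j % 3, Nat.mod_lt _ (by norm_num)⟩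

def idx (m : ℕ) (hm : 0 < m) (j : ℕ) : Fin m := ⟨j / 3 % m, Nat.mod_lt _ hm⟩

def plV {L m : ℕ} (hm : 0 < m) (qs : Fin m → (Fin 3 → Fin L)) (j : ℕ) : Fin L :=
  qs (idx m hm j) (plC j)

lemma plC_eq {m : ℕ} (hm : 0 < m) {L : ℕ} (qs : Fin m → (Fin 3 → Fin L))
    (i' k' : ℕ) (h3 : k' < 3) :
    plC (3 * i' + k') = ⟨k', h3⟩ ∧
    plV hm qs (3 * i' + k') = qs (idx m hm (3 * i')) ⟨k', h3⟩ := by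
  have hC : plC (3 * i' + k') = ⟨k', h3⟩ := by
    apply Fin.ext
    show (3 * i' + k') % 3 = k'
    omega
  refine ⟨hC, ?_⟩
  unfold plV
  rw [hC]
  congr 1
  unfold idx
  apply Fin.ext
  show (3 * i' + k') / 3 % m = (3 * i') / 3 % m
  congr 1
  omega

lemma mainInd {L m : ℕ} (hm : 0 < m) (hL : 0 < L) (qs : Fin m → (Fin 3 → Fin L)) :
    ∀ n : ℕ, ∀ x : GridEdge L → ZMod 2, d1 L x = 0 →
    (∀ e, x e ≠ 0 → ∃ j, j < n ∧ EP (plC j) (plV hm qs j) e) →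
    ∃ y : GridSquare L → ZMod 2,
      (∀ s, y s ≠ 0 → ∃ j, j < n ∧ SP (plC j) (plV hm qs j) s) ∧ d2 L y = x := by
  intro n
  induction n with
  | zero =>
    intro x hcyc hsupp
    refine ⟨0, by simp, ?_⟩
    rw [d2_zero]
    funext e
    by_contra he
    obtain ⟨j, hj, -⟩ := hsupp e (fun h => he (by simp [h]))
    omega
  | succ n ih =>
    intro x hcyc hsupp
    classical
    set c := plV hm qs n with hcdef
    set kP := plC n with hkPdef
    set x' : GridEdge L → ZMod 2 := fun e =>
      if (∃ j, j < n ∧ EP (plC j) (plV hm qs j) e) then x e else 0 with hx'def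
    set xP : GridEdge L → ZMod 2 := fun e => x e + x' e with hxPdef
    have hx'supp : ∀ e, x' e ≠ 0 →
        (x e ≠ 0 ∧ ∃ j, j < n ∧ EP (plC j) (plV hm qs j) e) := by
      intro e he
      by_cases hcnd : ∃ j, j < n ∧ EP (plC j) (plV hm qs j) e
      · refine ⟨?_, hcnd⟩
        have : x' e = x e := by simp only [hx'def]; rw [if_pos hcnd]
        rwa [this] at he
      · exact absurd (by simp only [hx'def]; rw [if_neg hcnd]) he
    have hxPsupp : ∀ e, xP e ≠ 0 → (x e ≠ 0 ∧ EP kP c e) := by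
      intro e he
      by_cases hcnd : ∃ j, j < n ∧ EP (plC j) (plV hm qs j) e
      · exfalso
        apply he
        have : x' e = x e := by simp only [hx'def]; rw [if_pos hcnd]
        simp only [hxPdef, this]
        exact z2_addself _
      · have hxe : xP e = x e := by
          have : x' e = 0 := by simp only [hx'def]; rw [if_neg hcnd]
          simp only [hxPdef, this, add_zero]
        rw [hxe] at he
        refine ⟨he, ?_⟩
        obtain ⟨j, hj, hEP⟩ := hsupp e he
        have hjn : j = n := by
          rcases Nat.lt_or_ge j n with h' | h'
          · exact absurd ⟨j, h', hEP⟩ hcnd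
          · omega
        subst hjn
        exact hEP
    have hbP : d1 L xP = d1 L x' := by
      have hxp : xP = x + x' := rfl
      rw [hxp, d1_add, hcyc]
      funext v
      simp
    have hbsum : (∑ v, d1 L x' v) = 0 := sum_d1 x'
    have hbsupp : ∀ v, d1 L x' v ≠ 0 →
        (v kP = c ∧ ∃ j, j < n ∧ v (plC j) = plV hm qs j) := by
      intro v hv
      constructor
      · have hv' : d1 L xP v ≠ 0 := by rw [hbP]; exact hv
        obtain ⟨e, he, hend⟩ := d1_support hv'
        exact EP_endpoint (hxPsupp e he).2 hend
      · obtain ⟨e, he, hend⟩ := d1_support hv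
        obtain ⟨-, j, hj, hEP⟩ := hx'supp e he
        exact ⟨j, hj, EP_endpoint hEP hend⟩
    -- the hub and routing
    have hub : ∃ g : Fin 3 → Fin L,
        ∀ u : Fin 3 → Fin L,
          (u kP = c ∧ ∃ j, j < n ∧ u (plC j) = plV hm qs j) →
          ∃ z, d1 L z = dl u + dl g ∧
            ∀ e, z e ≠ 0 →
              (EP kP c e ∧ ∃ j, j < n ∧ EP (plC j) (plV hm qs j) e) := by
      have hfin3 : ∀ t : Fin 3, t = ⟨0, by omega⟩ ∨ t = ⟨1, by omega⟩ ∨ t = ⟨2, by omega⟩ := by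
        rintro ⟨tv, ht⟩
        interval_cases tv
        · exact Or.inl rfl
        · exact Or.inr (Or.inl rfl)
        · exact Or.inr (Or.inr rfl)
      have mkne : ∀ (p q : ℕ) (hp : p < 3) (hq : q < 3), p ≠ q →
          (⟨p, hp⟩ : Fin 3) ≠ ⟨q, hq⟩ :=
        fun p q hp hq h hc => h (congrArg Fin.val hc)
      have d01 : (⟨0, by omega⟩ : Fin 3) ≠ ⟨1, by omega⟩ := mkne _ _ _ _ (by omega)
      have d02 : (⟨0, by omega⟩ : Fin 3) ≠ ⟨2, by omega⟩ := mkne _ _ _ _ (by omega)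
      have d10 : (⟨1, by omega⟩ : Fin 3) ≠ ⟨0, by omega⟩ := mkne _ _ _ _ (by omega)
      have d12 : (⟨1, by omega⟩ : Fin 3) ≠ ⟨2, by omega⟩ := mkne _ _ _ _ (by omega)
      have d20 : (⟨2, by omega⟩ : Fin 3) ≠ ⟨0, by omega⟩ := mkne _ _ _ _ (by omega)
      have d21 : (⟨2, by omega⟩ : Fin 3) ≠ ⟨1, by omega⟩ := mkne _ _ _ _ (by omega)
      have e00 : (3 : ℕ) * 0 = 0 := by norm_num
      have e01 : (3 : ℕ) * 0 + 1 = 1 := by norm_num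
      have e02 : (3 : ℕ) * 0 + 2 = 2 := by norm_num
      -- star-0 plane data
      obtain ⟨hC1, hV1⟩ := plC_eq hm qs 0 1 (by norm_num)
      rw [e01] at hC1 hV1
      rw [e00] at hV1
      obtain ⟨hC2, hV2⟩ := plC_eq hm qs 0 2 (by norm_num)
      rw [e02] at hC2 hV2
      rw [e00] at hV2
      have e000 : (3 : ℕ) * 0 + 0 = 0 := by norm_num
      obtain ⟨hC00, hV00⟩ := plC_eq hm qs 0 0 (by norm_num)
      rw [e000] at hC00 hV00
      rw [e00] at hV00
      have hdec : n % 3 = 0 ∨ n % 3 = 1 ∨ n % 3 = 2 := by omega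
      rcases hdec with hk | hk | hk
      · -- peeled plane has coordinate 0
        rcases Nat.eq_zero_or_pos n with hn0 | hnpos
        · subst hn0
          exact ⟨fun _ => ⟨0, hL⟩, fun u hu => absurd hu.2 (by rintro ⟨j, hj, -⟩; omega)⟩
        · have hn3 : 3 ≤ n := by omega
          obtain ⟨hC0, hV0⟩ := plC_eq hm qs (n / 3) 0 (by norm_num)
          have hneq : 3 * (n / 3) + 0 = n := by omega
          rw [hneq] at hC0 hV0
          have hkP0 : kP = ⟨0, by omega⟩ := hkPdef.trans hC0
          have hc0 : c = qs (idx m hm (3 * (n / 3))) ⟨0, by omega⟩ := hcdef.trans hV0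
          refine ⟨Function.update (fun t => qs (idx m hm 0) t) ⟨0, by omega⟩
            (qs (idx m hm (3 * (n / 3))) ⟨0, by omega⟩), fun u hu => ?_⟩
          obtain ⟨huP, j, hjn, huj⟩ := hu
          have hj3 : j % 3 < 3 := by omega
          obtain ⟨hCj, hVj⟩ := plC_eq hm qs (j / 3) (j % 3) hj3
          have hjd : 3 * (j / 3) + j % 3 = j := by omega
          rw [hjd] at hCj hVj
          have hl : j % 3 = 0 ∨ j % 3 = 1 ∨ j % 3 = 2 := by omega
          have huP' := huP
          rw [hkP0, hc0] at huP' 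
          rcases hl with hl | hl | hl
          · -- u lies in a previous coordinate-0 plane : move 1 then 2
            have hCj' : plC j = ⟨1, by omega⟩ → False := by
              intro hcc
              rw [hCj] at hcc
              have := congrArg Fin.val hcc
              simp at this
              omega
            have hCj0 : plC j = ⟨0, by omega⟩ := by
              rw [hCj]; exact Fin.ext hl
            obtain ⟨z, hz, hsz⟩ := twoLeg u ⟨1, by omega⟩ ⟨2, by omega⟩
              (plV hm qs 1) (plV hm qs 2) kP c (plC j) (plV hm qs j) (plC 1) (plV hm qs 1)
              (by rw [hkP0]; exact mkne _ _ _ _ (by omega)) (by rw [hkP0]; exact mkne _ _ _ _ (by omega)) huP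
              (by rw [hCj0]; exact mkne _ _ _ _ (by omega)) huj
              (by rw [hC1]; exact mkne _ _ _ _ (by omega))
              (by rw [hC1]; exact Function.update_self _ _ _)
            refine ⟨z, ?_, fun e he => ⟨(hsz e he).1, ?_⟩⟩
            · rw [hz]
              have hpt : Function.update (Function.update u ⟨1, by omega⟩ (plV hm qs 1))
                  ⟨2, by omega⟩ (plV hm qs 2) =
                  Function.update (fun t => qs (idx m hm 0) t) ⟨0, by omega⟩
                    (qs (idx m hm (3 * (n / 3))) ⟨0, by omega⟩) := by
                funext t
                rcases hfin3 t with rfl | rfl | rfl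
                · rw [Function.update_of_ne d02, Function.update_of_ne d01,
                    Function.update_self]
                  exact huP'
                · rw [Function.update_of_ne d12, Function.update_self,
                    Function.update_of_ne d10]
                  exact hV1
                · rw [Function.update_self, Function.update_of_ne d20]
                  exact hV2
              rw [hpt]
            · rcases (hsz e he).2 with h' | h'
              · exact ⟨j, hjn, h'⟩
              · exact ⟨1, by omega, h'⟩
          · -- u lies in a previous coordinate-1 plane : move 2 then 1
            have hCj1 : plC j = ⟨1, by omega⟩ := by
              rw [hCj]; exact Fin.ext hl
            obtain ⟨z, hz, hsz⟩ := twoLeg u ⟨2, by omega⟩ ⟨1, by omega⟩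
              (plV hm qs 2) (plV hm qs 1) kP c (plC j) (plV hm qs j) (plC 2) (plV hm qs 2)
              (by rw [hkP0]; exact mkne _ _ _ _ (by omega)) (by rw [hkP0]; exact mkne _ _ _ _ (by omega)) huP
              (by rw [hCj1]; exact mkne _ _ _ _ (by omega)) huj
              (by rw [hC2]; exact mkne _ _ _ _ (by omega))
              (by rw [hC2]; exact Function.update_self _ _ _)
            refine ⟨z, ?_, fun e he => ⟨(hsz e he).1, ?_⟩⟩
            · rw [hz]
              have hpt : Function.update (Function.update u ⟨2, by omega⟩ (plV hm qs 2))
                  ⟨1, by omega⟩ (plV hm qs 1) =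
                  Function.update (fun t => qs (idx m hm 0) t) ⟨0, by omega⟩
                    (qs (idx m hm (3 * (n / 3))) ⟨0, by omega⟩) := by
                funext t
                rcases hfin3 t with rfl | rfl | rfl
                · rw [Function.update_of_ne d01, Function.update_of_ne d02,
                    Function.update_self]
                  exact huP'
                · rw [Function.update_self, Function.update_of_ne d10]
                  exact hV1
                · rw [Function.update_of_ne d21, Function.update_self,
                    Function.update_of_ne d20]
                  exact hV2
              rw [hpt]
            · rcases (hsz e he).2 with h' | h'
              · exact ⟨j, hjn, h'⟩
              · exact ⟨2, by omega, h'⟩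
          · -- u lies in a previous coordinate-2 plane : move 1 then 2
            have hCj2 : plC j = ⟨2, by omega⟩ := by
              rw [hCj]; exact Fin.ext hl
            obtain ⟨z, hz, hsz⟩ := twoLeg u ⟨1, by omega⟩ ⟨2, by omega⟩
              (plV hm qs 1) (plV hm qs 2) kP c (plC j) (plV hm qs j) (plC 1) (plV hm qs 1)
              (by rw [hkP0]; exact mkne _ _ _ _ (by omega)) (by rw [hkP0]; exact mkne _ _ _ _ (by omega)) huP
              (by rw [hCj2]; exact mkne _ _ _ _ (by omega)) huj
              (by rw [hC1]; exact mkne _ _ _ _ (by omega))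
              (by rw [hC1]; exact Function.update_self _ _ _)
            refine ⟨z, ?_, fun e he => ⟨(hsz e he).1, ?_⟩⟩
            · rw [hz]
              have hpt : Function.update (Function.update u ⟨1, by omega⟩ (plV hm qs 1))
                  ⟨2, by omega⟩ (plV hm qs 2) =
                  Function.update (fun t => qs (idx m hm 0) t) ⟨0, by omega⟩
                    (qs (idx m hm (3 * (n / 3))) ⟨0, by omega⟩) := by
                funext t
                rcases hfin3 t with rfl | rfl | rfl
                · rw [Function.update_of_ne d02, Function.update_of_ne d01,
                    Function.update_self]
                  exact huP'
                · rw [Function.update_of_ne d12, Function.update_self,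
                    Function.update_of_ne d10]
                  exact hV1
                · rw [Function.update_self, Function.update_of_ne d20]
                  exact hV2
              rw [hpt]
            · rcases (hsz e he).2 with h' | h'
              · exact ⟨j, hjn, h'⟩
              · exact ⟨1, by omega, h'⟩
      · -- peeled plane has coordinate 1
        rcases Nat.lt_or_ge n 3 with hn3 | hn3
        · -- n = 1 : single previous plane, single-leg route
          have hn1 : n = 1 := by omega
          subst hn1
          have hkP1 : kP = ⟨1, by omega⟩ := hkPdef.trans hC1
          have hcV : c = qs (idx m hm 0) ⟨1, by omega⟩ := hcdef.trans hV1
          refine ⟨Function.update (fun t => qs (idx m hm 0) t) ⟨2, by omega⟩ ⟨0, hL⟩,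
            fun u hu => ?_⟩
          obtain ⟨huP, j, hjn, huj⟩ := hu
          have hj0 : j = 0 := by omega
          subst hj0
          have huj' := huj
          rw [hC00, hV00] at huj'
          have huP' := huP
          rw [hkP1, hcV] at huP'
          obtain ⟨z, hz, hsz⟩ := moveChain u ⟨2, by omega⟩ ⟨0, hL⟩ kP c (plC 0) (plV hm qs 0)
            (by rw [hkP1]; exact mkne _ _ _ _ (by omega))
            (by rw [hC00]; exact mkne _ _ _ _ (by omega)) huP huj
          refine ⟨z, ?_, fun e he => ⟨(hsz e he).1, 0, by omega, (hsz e he).2⟩⟩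
          rw [hz]
          have hpt : Function.update u ⟨2, by omega⟩ ⟨0, hL⟩ =
              Function.update (fun t => qs (idx m hm 0) t) ⟨2, by omega⟩ ⟨0, hL⟩ := by
            funext t
            rcases hfin3 t with rfl | rfl | rfl
            · rw [Function.update_of_ne d02, Function.update_of_ne d02]
              exact huj'
            · rw [Function.update_of_ne d12, Function.update_of_ne d12]
              exact huP'
            · rw [Function.update_self, Function.update_self]
          rw [hpt]
        · -- n ≥ 4 : generic two-leg routes
          have hn4 : 4 ≤ n := by omega
          obtain ⟨hC0, hV0⟩ := plC_eq hm qs (n / 3) 1 (by norm_num)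
          have hneq : 3 * (n / 3) + 1 = n := by omega
          rw [hneq] at hC0 hV0
          have hkP1 : kP = ⟨1, by omega⟩ := hkPdef.trans hC0
          have hc1 : c = qs (idx m hm (3 * (n / 3))) ⟨1, by omega⟩ := hcdef.trans hV0
          obtain ⟨hCs, hVs⟩ := plC_eq hm qs (n / 3) 0 (by norm_num)
          have hs0 : 3 * (n / 3) + 0 = 3 * (n / 3) := by omega
          rw [hs0] at hCs hVs
          have hsib_lt : 3 * (n / 3) < n := by omega
          have h2lt : (2 : ℕ) < n := by omega
          refine ⟨Function.update (fun t => qs (idx m hm (3 * (n / 3))) t) ⟨2, by omega⟩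
            (qs (idx m hm 0) ⟨2, by omega⟩), fun u hu => ?_⟩
          obtain ⟨huP, j, hjn, huj⟩ := hu
          have hj3 : j % 3 < 3 := by omega
          obtain ⟨hCj, hVj⟩ := plC_eq hm qs (j / 3) (j % 3) hj3
          have hjd : 3 * (j / 3) + j % 3 = j := by omega
          rw [hjd] at hCj hVj
          have huP' := huP
          rw [hkP1, hc1] at huP'
          rcases (show j % 3 = 0 ∨ j % 3 = 1 ∨ j % 3 = 2 by omega) with hl | hl | hl
          · -- previous coordinate-0 plane : move 2 then 0
            have hCj0 : plC j = ⟨0, by omega⟩ := by rw [hCj]; exact Fin.ext hl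
            obtain ⟨z, hz, hsz⟩ := twoLeg u ⟨2, by omega⟩ ⟨0, by omega⟩
              (plV hm qs 2) (plV hm qs (3 * (n / 3))) kP c (plC j) (plV hm qs j)
              (plC 2) (plV hm qs 2)
              (by rw [hkP1]; exact mkne _ _ _ _ (by omega))
              (by rw [hkP1]; exact mkne _ _ _ _ (by omega)) huP
              (by rw [hCj0]; exact mkne _ _ _ _ (by omega)) huj
              (by rw [hC2]; exact mkne _ _ _ _ (by omega))
              (by rw [hC2]; exact Function.update_self _ _ _)
            refine ⟨z, ?_, fun e he => ⟨(hsz e he).1, ?_⟩⟩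
            · rw [hz]
              have hpt : Function.update (Function.update u ⟨2, by omega⟩ (plV hm qs 2))
                  ⟨0, by omega⟩ (plV hm qs (3 * (n / 3))) =
                  Function.update (fun t => qs (idx m hm (3 * (n / 3))) t) ⟨2, by omega⟩
                    (qs (idx m hm 0) ⟨2, by omega⟩) := by
                funext t
                rcases hfin3 t with rfl | rfl | rfl
                · rw [Function.update_self, Function.update_of_ne d02]
                  exact hVs
                · rw [Function.update_of_ne d10, Function.update_of_ne d12,
                    Function.update_of_ne d12]
                  exact huP'
                · rw [Function.update_of_ne d20, Function.update_self, Function.update_self]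
                  exact hV2
              rw [hpt]
            · rcases (hsz e he).2 with h' | h'
              · exact ⟨j, hjn, h'⟩
              · exact ⟨2, h2lt, h'⟩
          · -- previous coordinate-1 plane : move 0 then 2
            have hCj1 : plC j = ⟨1, by omega⟩ := by rw [hCj]; exact Fin.ext hl
            obtain ⟨z, hz, hsz⟩ := twoLeg u ⟨0, by omega⟩ ⟨2, by omega⟩
              (plV hm qs (3 * (n / 3))) (plV hm qs 2) kP c (plC j) (plV hm qs j)
              (plC (3 * (n / 3))) (plV hm qs (3 * (n / 3)))
              (by rw [hkP1]; exact mkne _ _ _ _ (by omega))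
              (by rw [hkP1]; exact mkne _ _ _ _ (by omega)) huP
              (by rw [hCj1]; exact mkne _ _ _ _ (by omega)) huj
              (by rw [hCs]; exact mkne _ _ _ _ (by omega))
              (by rw [hCs]; exact Function.update_self _ _ _)
            refine ⟨z, ?_, fun e he => ⟨(hsz e he).1, ?_⟩⟩
            · rw [hz]
              have hpt : Function.update (Function.update u ⟨0, by omega⟩
                  (plV hm qs (3 * (n / 3)))) ⟨2, by omega⟩ (plV hm qs 2) =
                  Function.update (fun t => qs (idx m hm (3 * (n / 3))) t) ⟨2, by omega⟩
                    (qs (idx m hm 0) ⟨2, by omega⟩) := by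
                funext t
                rcases hfin3 t with rfl | rfl | rfl
                · rw [Function.update_of_ne d02, Function.update_self,
                    Function.update_of_ne d02]
                  exact hVs
                · rw [Function.update_of_ne d12, Function.update_of_ne d10,
                    Function.update_of_ne d12]
                  exact huP'
                · rw [Function.update_self, Function.update_self]
                  exact hV2
              rw [hpt]
            · rcases (hsz e he).2 with h' | h'
              · exact ⟨j, hjn, h'⟩
              · exact ⟨3 * (n / 3), hsib_lt, h'⟩
          · -- previous coordinate-2 plane : move 0 then 2
            have hCj2 : plC j = ⟨2, by omega⟩ := by rw [hCj]; exact Fin.ext hl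
            obtain ⟨z, hz, hsz⟩ := twoLeg u ⟨0, by omega⟩ ⟨2, by omega⟩
              (plV hm qs (3 * (n / 3))) (plV hm qs 2) kP c (plC j) (plV hm qs j)
              (plC (3 * (n / 3))) (plV hm qs (3 * (n / 3)))
              (by rw [hkP1]; exact mkne _ _ _ _ (by omega))
              (by rw [hkP1]; exact mkne _ _ _ _ (by omega)) huP
              (by rw [hCj2]; exact mkne _ _ _ _ (by omega)) huj
              (by rw [hCs]; exact mkne _ _ _ _ (by omega))
              (by rw [hCs]; exact Function.update_self _ _ _)
            refine ⟨z, ?_, fun e he => ⟨(hsz e he).1, ?_⟩⟩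
            · rw [hz]
              have hpt : Function.update (Function.update u ⟨0, by omega⟩
                  (plV hm qs (3 * (n / 3)))) ⟨2, by omega⟩ (plV hm qs 2) =
                  Function.update (fun t => qs (idx m hm (3 * (n / 3))) t) ⟨2, by omega⟩
                    (qs (idx m hm 0) ⟨2, by omega⟩) := by
                funext t
                rcases hfin3 t with rfl | rfl | rfl
                · rw [Function.update_of_ne d02, Function.update_self,
                    Function.update_of_ne d02]
                  exact hVs
                · rw [Function.update_of_ne d12, Function.update_of_ne d10,
                    Function.update_of_ne d12]
                  exact huP'
                · rw [Function.update_self, Function.update_self]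
                  exact hV2
              rw [hpt]
            · rcases (hsz e he).2 with h' | h'
              · exact ⟨j, hjn, h'⟩
              · exact ⟨3 * (n / 3), hsib_lt, h'⟩
      · -- peeled plane has coordinate 2
        obtain ⟨hC0, hV0⟩ := plC_eq hm qs (n / 3) 2 (by norm_num)
        have hneq : 3 * (n / 3) + 2 = n := by omega
        rw [hneq] at hC0 hV0
        have hkP2 : kP = ⟨2, by omega⟩ := hkPdef.trans hC0
        have hc2 : c = qs (idx m hm (3 * (n / 3))) ⟨2, by omega⟩ := hcdef.trans hV0
        obtain ⟨hCs0, hVs0⟩ := plC_eq hm qs (n / 3) 0 (by norm_num)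
        have hs0 : 3 * (n / 3) + 0 = 3 * (n / 3) := by omega
        rw [hs0] at hCs0 hVs0
        obtain ⟨hCs1, hVs1⟩ := plC_eq hm qs (n / 3) 1 (by norm_num)
        have hsib0_lt : 3 * (n / 3) < n := by omega
        have hsib1_lt : 3 * (n / 3) + 1 < n := by omega
        refine ⟨fun t => qs (idx m hm (3 * (n / 3))) t, fun u hu => ?_⟩
        obtain ⟨huP, j, hjn, huj⟩ := hu
        have hj3 : j % 3 < 3 := by omega
        obtain ⟨hCj, hVj⟩ := plC_eq hm qs (j / 3) (j % 3) hj3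
        have hjd : 3 * (j / 3) + j % 3 = j := by omega
        rw [hjd] at hCj hVj
        have huP' := huP
        rw [hkP2, hc2] at huP'
        rcases (show j % 3 = 0 ∨ j % 3 = 1 ∨ j % 3 = 2 by omega) with hl | hl | hl
        · -- previous coordinate-0 plane : move 1 then 0
          have hCj0 : plC j = ⟨0, by omega⟩ := by rw [hCj]; exact Fin.ext hl
          obtain ⟨z, hz, hsz⟩ := twoLeg u ⟨1, by omega⟩ ⟨0, by omega⟩
            (plV hm qs (3 * (n / 3) + 1)) (plV hm qs (3 * (n / 3))) kP c
            (plC j) (plV hm qs j) (plC (3 * (n / 3) + 1)) (plV hm qs (3 * (n / 3) + 1))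
            (by rw [hkP2]; exact mkne _ _ _ _ (by omega))
            (by rw [hkP2]; exact mkne _ _ _ _ (by omega)) huP
            (by rw [hCj0]; exact mkne _ _ _ _ (by omega)) huj
            (by rw [hCs1]; exact mkne _ _ _ _ (by omega))
            (by rw [hCs1]; exact Function.update_self _ _ _)
          refine ⟨z, ?_, fun e he => ⟨(hsz e he).1, ?_⟩⟩
          · rw [hz]
            have hpt : Function.update (Function.update u ⟨1, by omega⟩
                (plV hm qs (3 * (n / 3) + 1))) ⟨0, by omega⟩ (plV hm qs (3 * (n / 3))) =
                fun t => qs (idx m hm (3 * (n / 3))) t := by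
              funext t
              rcases hfin3 t with rfl | rfl | rfl
              · rw [Function.update_self]
                exact hVs0
              · rw [Function.update_of_ne d10, Function.update_self]
                exact hVs1
              · rw [Function.update_of_ne d20, Function.update_of_ne d21]
                exact huP'
            rw [hpt]
          · rcases (hsz e he).2 with h' | h'
            · exact ⟨j, hjn, h'⟩
            · exact ⟨3 * (n / 3) + 1, hsib1_lt, h'⟩
        · -- previous coordinate-1 plane : move 0 then 1
          have hCj1 : plC j = ⟨1, by omega⟩ := by rw [hCj]; exact Fin.ext hl
          obtain ⟨z, hz, hsz⟩ := twoLeg u ⟨0, by omega⟩ ⟨1, by omega⟩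
            (plV hm qs (3 * (n / 3))) (plV hm qs (3 * (n / 3) + 1)) kP c
            (plC j) (plV hm qs j) (plC (3 * (n / 3))) (plV hm qs (3 * (n / 3)))
            (by rw [hkP2]; exact mkne _ _ _ _ (by omega))
            (by rw [hkP2]; exact mkne _ _ _ _ (by omega)) huP
            (by rw [hCj1]; exact mkne _ _ _ _ (by omega)) huj
            (by rw [hCs0]; exact mkne _ _ _ _ (by omega))
            (by rw [hCs0]; exact Function.update_self _ _ _)
          refine ⟨z, ?_, fun e he => ⟨(hsz e he).1, ?_⟩⟩
          · rw [hz]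
            have hpt : Function.update (Function.update u ⟨0, by omega⟩
                (plV hm qs (3 * (n / 3)))) ⟨1, by omega⟩ (plV hm qs (3 * (n / 3) + 1)) =
                fun t => qs (idx m hm (3 * (n / 3))) t := by
              funext t
              rcases hfin3 t with rfl | rfl | rfl
              · rw [Function.update_of_ne d01, Function.update_self]
                exact hVs0
              · rw [Function.update_self]
                exact hVs1
              · rw [Function.update_of_ne d21, Function.update_of_ne d20]
                exact huP'
            rw [hpt]
          · rcases (hsz e he).2 with h' | h'
            · exact ⟨j, hjn, h'⟩
            · exact ⟨3 * (n / 3), hsib0_lt, h'⟩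
        · -- previous coordinate-2 plane : move 0 then 1
          have hCj2 : plC j = ⟨2, by omega⟩ := by rw [hCj]; exact Fin.ext hl
          obtain ⟨z, hz, hsz⟩ := twoLeg u ⟨0, by omega⟩ ⟨1, by omega⟩
            (plV hm qs (3 * (n / 3))) (plV hm qs (3 * (n / 3) + 1)) kP c
            (plC j) (plV hm qs j) (plC (3 * (n / 3))) (plV hm qs (3 * (n / 3)))
            (by rw [hkP2]; exact mkne _ _ _ _ (by omega))
            (by rw [hkP2]; exact mkne _ _ _ _ (by omega)) huP
            (by rw [hCj2]; exact mkne _ _ _ _ (by omega)) huj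
            (by rw [hCs0]; exact mkne _ _ _ _ (by omega))
            (by rw [hCs0]; exact Function.update_self _ _ _)
          refine ⟨z, ?_, fun e he => ⟨(hsz e he).1, ?_⟩⟩
          · rw [hz]
            have hpt : Function.update (Function.update u ⟨0, by omega⟩
                (plV hm qs (3 * (n / 3)))) ⟨1, by omega⟩ (plV hm qs (3 * (n / 3) + 1)) =
                fun t => qs (idx m hm (3 * (n / 3))) t := by
              funext t
              rcases hfin3 t with rfl | rfl | rfl
              · rw [Function.update_of_ne d01, Function.update_self]
                exact hVs0
              · rw [Function.update_self]
                exact hVs1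
              · rw [Function.update_of_ne d21, Function.update_of_ne d20]
                exact huP'
            rw [hpt]
          · rcases (hsz e he).2 with h' | h'
            · exact ⟨j, hjn, h'⟩
            · exact ⟨3 * (n / 3), hsib0_lt, h'⟩
    obtain ⟨g, hg⟩ := hub
    have hreach : ∀ u v, d1 L x' u ≠ 0 → d1 L x' v ≠ 0 → u ≠ v →
        ∃ z, d1 L z = dl u + dl v ∧
          ∀ e, z e ≠ 0 →
            (EP kP c e ∧ ∃ j, j < n ∧ EP (plC j) (plV hm qs j) e) := by
      intro u v hu hv _
      obtain ⟨z1, hz1, hs1⟩ := hg u (hbsupp u hu)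
      obtain ⟨z2, hz2, hs2⟩ := hg v (hbsupp v hv)
      exact ⟨z1 + z2, chain_comp hz1 hz2, supp_add hs1 hs2⟩
    obtain ⟨z, hz, hzsupp⟩ := evenFill
      (fun e => EP kP c e ∧ ∃ j, j < n ∧ EP (plC j) (plV hm qs j) e)
      (d1 L x') hbsum hreach
    -- the part supported on earlier planes
    have hcyc1 : d1 L (x' + z) = 0 := by
      rw [d1_add, hz]
      funext w
      simp only [Pi.add_apply]
      exact z2_addself _
    have hsupp1 : ∀ e, (x' + z) e ≠ 0 → ∃ j, j < n ∧ EP (plC j) (plV hm qs j) e :=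
      supp_add (fun e he => (hx'supp e he).2) (fun e he => (hzsupp e he).2)
    obtain ⟨y1, hy1supp, hy1⟩ := ih (x' + z) hcyc1 hsupp1
    -- the part supported on the peeled plane
    have hcyc2 : d1 L (xP + z) = 0 := by
      rw [d1_add, hbP, hz]
      funext w
      simp only [Pi.add_apply]
      exact z2_addself _
    have hsupp2 : ∀ e, (xP + z) e ≠ 0 → EP kP c e :=
      supp_add (fun e he => (hxPsupp e he).2) (fun e he => (hzsupp e he).1)
    obtain ⟨ca, cb, hab, hak, hbk, hord, htot⟩ :
        ∃ ca cb : Fin 3, ca ≠ cb ∧ ca ≠ kP ∧ cb ≠ kP ∧ ca < cb ∧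
          (∀ j : Fin 3, j = ca ∨ j = cb ∨ j = kP) := by
      have : ∀ kk : Fin 3, ∃ ca cb : Fin 3, ca ≠ cb ∧ ca ≠ kk ∧ cb ≠ kk ∧ ca < cb ∧
          (∀ j : Fin 3, j = ca ∨ j = cb ∨ j = kk) := by decide
      exact this kP
    have hxdir : ∀ e, (xP + z) e ≠ 0 → e.1.2 ≠ kP := fun e he => EP_dir (hsupp2 e he)
    have hxkc : ∀ e, (xP + z) e ≠ 0 → e.1.1 kP = c := fun e he => (hsupp2 e he).1
    obtain ⟨y2, hy2supp, hy2⟩ := planeFill hab hak hbk hord htot hxdir hcyc2 c hxkc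
    refine ⟨y1 + y2, ?_, ?_⟩
    · intro s hs
      by_cases h1 : y1 s = 0
      · have h2 : y2 s ≠ 0 := fun h2 => hs (by simp [Pi.add_apply, h1, h2])
        obtain ⟨hsa, hsb, hsk⟩ := hy2supp s h2
        exact ⟨n, Nat.lt_succ_self n, hsk, by rw [hsa]; exact hak, by rw [hsb]; exact hbk⟩
      · obtain ⟨j, hj, hSP⟩ := hy1supp s h1
        exact ⟨j, Nat.lt_succ_of_lt hj, hSP⟩
    · rw [d2_add, hy1, hy2]
      funext e
      simp only [Pi.add_apply, hxPdef]
      have hzz : ∀ p q r : ZMod 2, (p + q) + ((r + p) + q) = r := by decide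
      exact hzz _ _ _

lemma corner_coord {s : GridSquare L} {v : Fin 3 → Fin L} (h : s.corner v)
    (l : Fin 3) (h1 : s.1.2.1 ≠ l) (h2 : s.1.2.2 ≠ l) : v l = s.1.1 l := by
  rcases h with rfl | hst | hst | ⟨w, hw1, hw2⟩
  · rfl
  · exact hst.1 l (Ne.symm h1)
  · exact hst.1 l (Ne.symm h2)
  · rw [hw2.1 l (Ne.symm h2), hw1.1 l (Ne.symm h1)]

end Stmt13

/-- **Unions of star planes in `[L]³` have trivial first homology over `𝔽₂`.**
If the 1-chain `x` is supported on the edges of `Λ(q₁) ∪ ⋯ ∪ Λ(q_m)` (meaning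
each edge in its support has both endpoints in some `Λ(qᵢ)`) and `∂₁ x = 0`,
then `x = ∂₂ y` for a 2-chain `y` supported on squares all of whose corners lie
in some `Λ(qᵢ)`. -/
theorem stmt13 (L m : ℕ) (hm : 1 ≤ m) (qs : Fin m → (Fin 3 → Fin L))
    (x : GridEdge L → ZMod 2)
    (hsupp : ∀ e : GridEdge L, x e ≠ 0 →
      ∃ i : Fin m, e.1.1 ∈ starPlane (qs i) ∧ e.upper ∈ starPlane (qs i))
    (hcycle : d1 L x = 0) :
    ∃ y : GridSquare L → ZMod 2,
      (∀ s : GridSquare L, y s ≠ 0 →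
        ∃ i : Fin m, ∀ v : Fin 3 → Fin L, s.corner v → v ∈ starPlane (qs i)) ∧
      d2 L y = x := by
  classical
  rcases Nat.eq_zero_or_pos L with hL0 | hL
  · subst hL0
    refine ⟨0, by simp, ?_⟩
    rw [Stmt13.d2_zero]
    funext e
    exact absurd e.2 (by omega)
  have hm0 : 0 < m := hm
  have hsupp' : ∀ e, x e ≠ 0 →
      ∃ j, j < 3 * m ∧ Stmt13.EP (Stmt13.plC j) (Stmt13.plV hm0 qs j) e := by
    intro e he
    obtain ⟨i, h1, h2⟩ := hsupp e he
    obtain ⟨jc, hjne, hje⟩ := Stmt13.edge_classify e h1 h2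
    refine ⟨3 * i.val + jc.val, by have := i.isLt; have := jc.isLt; omega, ?_⟩
    obtain ⟨hC, hV⟩ := Stmt13.plC_eq hm0 qs i.val jc.val jc.isLt
    have hCj : Stmt13.plC (3 * i.val + jc.val) = jc := by rw [hC]
    have hidx : Stmt13.idx m hm0 (3 * i.val) = i := by
      apply Fin.ext
      show 3 * i.val / 3 % m = i.val
      have h3 : 3 * i.val / 3 = i.val := by omega
      rw [h3]
      exact Nat.mod_eq_of_lt i.isLt
    have hVj : Stmt13.plV hm0 qs (3 * i.val + jc.val) = qs i jc := by
      rw [hV, hidx]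
    rw [hCj, hVj]
    exact Stmt13.EP_of (Ne.symm hjne) hje
  obtain ⟨y, hysupp, hy⟩ := Stmt13.mainInd hm0 hL qs (3 * m) x hcycle hsupp'
  refine ⟨y, ?_, hy⟩
  intro s hs
  obtain ⟨j, hj, hC, hD1, hD2⟩ := hysupp s hs
  refine ⟨Stmt13.idx m hm0 j, fun v hv => ?_⟩
  have hvc := Stmt13.corner_coord hv (Stmt13.plC j) hD1 hD2
  exact Stmt13.star_of_eq (Stmt13.plC j) (by rw [hvc, hC]; rfl)
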